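/- arXiv:2205.11662 — 2 statements merged into one kernel-verified Lean document; each statement's English description precedes it below -/
import Mathlib

section
/- Let G be a group, {H_λ}_{λ∈Λ} a collection of subgroups of G, and X a symmetric relative generating set of G with respect to {H_λ}_{λ∈Λ} with 1 ∈ X, and suppose {H_λ}_{λ∈Λ} is hyperbolically embedded in G with respect to X. Then any exponential equation a_1 g_1^{x_1} a_2 g_2^{x_2} ... a_n g_n^{x_n} = 1 with arbitrary coefficients a_i ∈ G and g_i ∈ H_{λ(i)} for some λ(i) ∈ Λ (i = 1, ..., n) is equivalent to a finite disjunction Φ = ⋁_{i=1}^{k} ⋀_{j=1}^{s_i} L_{i,j} of finite conjunctions of exponential equations, such that in each conjunction the equations are pairwise independent and each L_{i,j} is an exponential equation over H_λ for some λ ∈ Λ. -/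
/-! Common definitions for formalizing "Exponential equations in acylindrically
hyperbolic groups" -/

namespace ExpPaper

/-- An atom of an exponential expression: either a constant coefficient `a ∈ G`,
or a power `g ^ x_i` of a fixed element `g ∈ G`, where `x_i` is the variable
indexed by `i`. -/
inductive Atom (G : Type*) (ι : Type*) where
  | const : G → Atom G ι
  | pow : G → ι → Atom G ι

namespace Atom

variable {G ι : Type*}

/-- Evaluation of an atom at a tuple `k` of integer values of the variables. -/
def eval [Group G] (k : ι → ℤ) : Atom G ι → G
  | const a => a
  | pow g i => g ^ k i

/-- The group element underlying an atom. -/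
def carrier : Atom G ι → G
  | const a => a
  | pow g _ => g

end Atom

/-- An exponential equation over a group `G` with variables indexed by `ι`:
a formal product of coefficients and powers `g^{x_i}`, equated to `1`. -/
structure ExpEq (G : Type*) (ι : Type*) where
  atoms : List (Atom G ι)

namespace ExpEq

variable {G ι : Type*}

/-- A tuple `k : ι → ℤ` is a solution of the exponential equation `E`. -/
def holds [Group G] (E : ExpEq G ι) (k : ι → ℤ) : Prop :=
  (E.atoms.map (Atom.eval k)).prod = 1

/-- The set of variables occurring in an exponential equation. -/
def vars (E : ExpEq G ι) : Set ι := {i | ∃ g, Atom.pow g i ∈ E.atoms}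

/-- Two exponential equations are independent if their sets of variables are disjoint. -/
def Indep (E F : ExpEq G ι) : Prop := Disjoint E.vars F.vars

/-- An exponential equation is over a subset `A ⊆ G` if all its coefficients and
all bases of its powers lie in `A`. -/
def isOver (E : ExpEq G ι) (A : Set G) : Prop := ∀ t ∈ E.atoms, t.carrier ∈ A

/-- All bases `g` of powers `g^{x_i}` occurring in `E` satisfy the predicate `P`
(used for "elliptic" and "loxodromic" equations). -/
def basesIn (E : ExpEq G ι) (P : G → Prop) : Prop :=
  ∀ g i, Atom.pow g i ∈ E.atoms → P g

/-- A finitary exponential equation: one of the form `a * g ^ x = 1` with `g` of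
finite order. -/
def Finitary [Group G] (E : ExpEq G ι) : Prop :=
  ∃ (a g : G) (i : ι), E.atoms = [Atom.const a, Atom.pow g i] ∧ IsOfFinOrder g

end ExpEq

/-- The solution set in `ℤ^n` of the standard exponential equation
`a 1 * g 1 ^ x 1 * ... * a n * g n ^ x n = 1`. -/
def stdSolZ {G : Type*} [Group G] {n : ℕ} (a g : Fin n → G) : Set (Fin n → ℤ) :=
  {k | (List.ofFn fun i => a i * g i ^ k i).prod = 1}

/-- The set of `ℕ`-solutions of the standard exponential equation. -/
def stdSolN {G : Type*} [Group G] {n : ℕ} (a g : Fin n → G) : Set (Fin n → ℕ) :=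
  {k | (List.ofFn fun i => a i * g i ^ k i).prod = 1}

/-- `k` satisfies the disjunction of the finite systems (conjunctions) collected in `Φ`. -/
def SatDisj {G ι : Type*} [Group G] (Φ : List (List (ExpEq G ι))) (k : ι → ℤ) : Prop :=
  ∃ sys ∈ Φ, ∀ E ∈ sys, E.holds k

section Action

variable {G α : Type*} [Group G] [MulAction G α]

/-- `g` is elliptic with respect to the action of `G` on a space with distance
function `d`: some orbit of `⟨g⟩` is bounded. -/
def EllipticWith (d : α → α → ℝ) (g : G) : Prop :=
  ∃ x : α, ∃ B : ℝ, ∀ n : ℤ, d x (g ^ n • x) ≤ B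

/-- `g` is loxodromic with respect to the action of `G` on a space with distance
function `d`: some orbit map `n ↦ g ^ n • x` is a quasi-isometric embedding of `ℤ`. -/
def LoxodromicWith (d : α → α → ℝ) (g : G) : Prop :=
  ∃ x : α, ∃ κ ε : ℝ, 1 ≤ κ ∧ 0 ≤ ε ∧
    ∀ m n : ℤ, ((|m - n| : ℤ) : ℝ) / κ - ε ≤ d (g ^ m • x) (g ^ n • x)

/-- The action of `G` on a space with distance function `d` is acylindrical. -/
def AcylindricalWith (G : Type*) {α : Type*} [Group G] [MulAction G α]
    (d : α → α → ℝ) : Prop :=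
  ∀ ε : ℝ, 0 < ε → ∃ R : ℝ, 0 < R ∧ ∃ N : ℕ, ∀ x y : α, R ≤ d x y →
    {h : G | d x (h • x) ≤ ε ∧ d y (h • y) ≤ ε}.Finite ∧
    {h : G | d x (h • x) ≤ ε ∧ d y (h • y) ≤ ε}.ncard ≤ N

end Action

/-- The action of `G` on the metric space `α` is by isometries. -/
def IsometricAction (G α : Type*) [Group G] [MulAction G α] [MetricSpace α] : Prop :=
  ∀ g : G, Isometry fun x : α => g • x

/-- `f : ℝ → α` is a geodesic segment from `x` to `y`, parametrized by arclength
on `[0, dist x y]`. -/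
def IsGeodesicSeg {α : Type*} [MetricSpace α] (x y : α) (f : ℝ → α) : Prop :=
  f 0 = x ∧ f (dist x y) = y ∧
    ∀ s ∈ Set.Icc (0 : ℝ) (dist x y), ∀ t ∈ Set.Icc (0 : ℝ) (dist x y),
      dist (f s) (f t) = |s - t|

/-- A geodesic metric space: any two points are joined by a geodesic segment. -/
def GeodesicSpace (α : Type*) [MetricSpace α] : Prop :=
  ∀ x y : α, ∃ f : ℝ → α, IsGeodesicSeg x y f

/-- A metric space is Gromov hyperbolic if for some `δ ≥ 0` every geodesic
triangle is `δ`-thin: each side lies in the `δ`-neighborhood of the union of the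
other two sides. -/
def GromovHyperbolicSpace (α : Type*) [MetricSpace α] : Prop :=
  ∃ δ : ℝ, 0 ≤ δ ∧ ∀ x y z : α, ∀ fxy fyz fxz : ℝ → α,
    IsGeodesicSeg x y fxy → IsGeodesicSeg y z fyz → IsGeodesicSeg x z fxz →
    ∀ s ∈ Set.Icc (0 : ℝ) (dist x y),
      ∃ p ∈ fyz '' Set.Icc (0 : ℝ) (dist y z) ∪ fxz '' Set.Icc (0 : ℝ) (dist x z),
        dist (fxy s) p ≤ δ

/-- The maximal elementary subgroup associated with a loxodromic element `g`,
as a subset of `G`: `E_G(g) = {f | ∃ n > 0, f⁻¹ g^n f = g^{± n}}`. -/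
def EG {G : Type*} [Group G] (g : G) : Set G :=
  {f | ∃ m : ℕ, 0 < m ∧ (f⁻¹ * g ^ m * f = g ^ m ∨ f⁻¹ * g ^ m * f = (g ^ m)⁻¹)}

/-- Word length of `g` with respect to a (symmetric) generating set `X ⊆ G`. -/
noncomputable def wordLen {G : Type*} [Group G] (X : Set G) (g : G) : ℕ :=
  sInf {m | ∃ w : List G, w.length = m ∧ (∀ y ∈ w, y ∈ X) ∧ w.prod = g}

/-- The word metric on (the vertex set of) the Cayley graph `Γ(G, X)`. -/
noncomputable def wordDist {G : Type*} [Group G] (X : Set G) (u v : G) : ℝ :=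
  (wordLen X (u⁻¹ * v) : ℝ)

/-- A distance function is Gromov hyperbolic in the four-point sense:
`(x|y)_w ≥ min ((x|z)_w, (z|y)_w) - δ` for all `x y z w`. -/
def FourPointHyperbolic {α : Type*} (d : α → α → ℝ) : Prop :=
  ∃ δ : ℝ, 0 ≤ δ ∧ ∀ x y z w : α,
    min ((d x w + d z w - d x z) / 2) ((d z w + d y w - d z y) / 2) - δ ≤
      (d x w + d y w - d x y) / 2

/-- A group is virtually cyclic if it contains a cyclic subgroup of finite index. -/
def IsVirtuallyCyclic (G : Type*) [Group G] : Prop :=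
  ∃ C : Subgroup G, IsCyclic ↥C ∧ C.index ≠ 0

/-- A letter of the alphabet `X ⊔ 𝓗`, `𝓗 = ⊔_λ H_λ`, used to label the edges of the
relative Cayley graph `Γ(G, X ⊔ 𝓗)`. -/
inductive RelLetter (G : Type*) {Λ : Type*} [Group G] (X : Set G) (H : Λ → Subgroup G) where
  | ofX (x : G) (hx : x ∈ X) : RelLetter G X H
  | ofH (lam : Λ) (h : G) (hh : h ∈ H lam) : RelLetter G X H

namespace RelLetter

variable {G Λ : Type*} [Group G] {X : Set G} {H : Λ → Subgroup G}

/-- The group element represented by a letter. -/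
def val : RelLetter G X H → G
  | ofX x _ => x
  | ofH _ h _ => h

/-- The index `λ` if the letter comes from the alphabet `H_λ`, and `none` if it
comes from `X`. -/
def lamOf : RelLetter G X H → Option Λ
  | ofX _ _ => none
  | ofH lam _ _ => some lam

end RelLetter

/-- The vertex reached after the first `j` edges of the path starting at `g0`
labelled by the word `w` in the relative Cayley graph. -/
def pathVertex {G Λ : Type*} [Group G] {X : Set G} {H : Λ → Subgroup G}
    (g0 : G) (w : List (RelLetter G X H)) (j : ℕ) : G :=
  g0 * ((w.map RelLetter.val).take j).prod

/-- Word length in the relative Cayley graph `Γ(G, X ⊔ 𝓗)`. -/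
noncomputable def relWordLen {G Λ : Type*} [Group G] (X : Set G) (H : Λ → Subgroup G)
    (g : G) : ℕ :=
  sInf {m | ∃ w : List (RelLetter G X H), w.length = m ∧ (w.map RelLetter.val).prod = g}

/-- The distance function on (the vertex set of) the relative Cayley graph
`Γ(G, X ⊔ 𝓗)`. -/
noncomputable def relDist {G Λ : Type*} [Group G] (X : Set G) (H : Λ → Subgroup G)
    (u v : G) : ℝ :=
  (relWordLen X H (u⁻¹ * v) : ℝ)

/-- The relative metric `d̂_λ` on `H_λ`: the length of a shortest path in
`Γ(G, X ⊔ 𝓗)` from `a` to `b` that has no edges in the complete subgraph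
`Γ(H_λ, H_λ)`, and `∞` if there is no such path. -/
noncomputable def relMetric {G Λ : Type*} [Group G] (X : Set G) (H : Λ → Subgroup G)
    (lam : Λ) (a b : G) : ℕ∞ :=
  sInf {m : ℕ∞ | ∃ w : List (RelLetter G X H),
    (w.map RelLetter.val).prod = a⁻¹ * b ∧
    (∀ j : Fin w.length,
      ¬ ((w.get j).lamOf = some lam ∧ pathVertex a w (j : ℕ) ∈ H lam)) ∧
    m = (w.length : ℕ∞)}

/-- The collection `{H_λ}` is hyperbolically embedded in `G` with respect to `X`:
`X` together with the `H_λ` generates `G`, the relative Cayley graph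
`Γ(G, X ⊔ 𝓗)` is hyperbolic, and each relative metric `d̂_λ` is proper. -/
def IsHypEmbedded {G Λ : Type*} [Group G] (X : Set G) (H : Λ → Subgroup G) : Prop :=
  Subgroup.closure (X ∪ ⋃ lam, (H lam : Set G)) = ⊤ ∧
  FourPointHyperbolic (relDist X H) ∧
  ∀ lam : Λ, ∀ r : ℕ, {h : G | h ∈ H lam ∧ relMetric X H lam 1 h ≤ (r : ℕ∞)}.Finite

/-- `G` is relatively hyperbolic with respect to `{H_λ}` (in the sense of Osin):
`{H_λ}` is hyperbolically embedded in `G` with respect to some finite symmetric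
relative generating set containing `1`. -/
def RelativelyHyperbolic {G Λ : Type*} [Group G] (H : Λ → Subgroup G) : Prop :=
  ∃ X : Set G, X.Finite ∧ X = X⁻¹ ∧ (1 : G) ∈ X ∧ IsHypEmbedded X H

/-- A permutation of `{1, ..., n}` is Catalan if its orbits form a non-crossing
partition. -/
def IsCatalan {n : ℕ} (σ : Equiv.Perm (Fin n)) : Prop :=
  ∀ k l s t : Fin n, σ.SameCycle k l → σ.SameCycle s t →
    k < s → s < l → l < t → σ.SameCycle k s

/-- A `ℤ`-linear subset of `ℤ^ι`: the image of `ℤ^d` under an affine map `z ↦ Az + b`. -/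
def IsZLinear {ι : Type*} (S : Set (ι → ℤ)) : Prop :=
  ∃ (d : ℕ) (A : Matrix ι (Fin d) ℤ) (b : ι → ℤ),
    S = Set.range fun z : Fin d → ℤ => A.mulVec z + b

/-- A `ℤ`-semilinear subset of `ℤ^ι`: a finite union of `ℤ`-linear subsets. -/
def IsZSemilinear {ι : Type*} (S : Set (ι → ℤ)) : Prop :=
  ∃ (m : ℕ) (f : Fin m → Set (ι → ℤ)), (∀ i, IsZLinear (f i)) ∧ S = ⋃ i, f i

/-- A linear subset of `ℕ^ι`: the image of `ℕ^d` under an affine map `z ↦ Az + b`. -/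
def IsNLinear {ι : Type*} (S : Set (ι → ℕ)) : Prop :=
  ∃ (d : ℕ) (A : Matrix ι (Fin d) ℕ) (b : ι → ℕ),
    S = Set.range fun z : Fin d → ℕ => A.mulVec z + b

/-- A semilinear subset of `ℕ^ι`: a finite union of linear subsets. -/
def IsNSemilinear {ι : Type*} (S : Set (ι → ℕ)) : Prop :=
  ∃ (m : ℕ) (f : Fin m → Set (ι → ℕ)), (∀ i, IsNLinear (f i)) ∧ S = ⋃ i, f i

/-- The concatenation `A ⊕ B ⊆ R^{s+t}` of `A ⊆ R^s` and `B ⊆ R^t`. -/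
def concatSet {R : Type*} {s t : ℕ} (A : Set (Fin s → R)) (B : Set (Fin t → R)) :
    Set (Fin (s + t) → R) :=
  {v | (fun i => v (Fin.castAdd t i)) ∈ A ∧ (fun j => v (Fin.natAdd s j)) ∈ B}

/-- Function symbols of the language `⟨+, 0, 1⟩` of (weak) Presburger arithmetic. -/
inductive PresFunc : ℕ → Type
  | zero : PresFunc 0
  | one : PresFunc 0
  | add : PresFunc 2

/-- The first-order language `⟨+, 0, 1⟩` of (weak) Presburger arithmetic. -/
def presLang : FirstOrder.Language :=
  { Functions := PresFunc, Relations := fun _ => Empty }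

/-- The standard interpretation of `⟨+, 0, 1⟩` in `ℤ` (weak Presburger arithmetic). -/
instance : presLang.Structure ℤ where
  funMap {_n} f v :=
    match f with
    | PresFunc.zero => 0
    | PresFunc.one => 1
    | PresFunc.add => v 0 + v 1
  RelMap {_n} r := r.elim

/-- The standard interpretation of `⟨+, 0, 1⟩` in `ℕ` (Presburger arithmetic). -/
instance : presLang.Structure ℕ where
  funMap {_n} f v :=
    match f with
    | PresFunc.zero => 0
    | PresFunc.one => 1
    | PresFunc.add => v 0 + v 1
  RelMap {_n} r := r.elim

end ExpPaper

open ExpPaper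

namespace PfAux

variable {G Λ ι : Type*} [Group G] {X : Set G} {H : Λ → Subgroup G}

/-! ### Atom lists -/

def evalL (k : ι → ℤ) (L : List (Atom G ι)) : G := (L.map (Atom.eval k)).prod

def varsL (L : List (Atom G ι)) : Set ι := {i | ∃ g, Atom.pow g i ∈ L}

@[simp] lemma atom_eval_const (k : ι → ℤ) (a : G) :
    Atom.eval k (Atom.const a : Atom G ι) = a := rfl

@[simp] lemma atom_eval_pow (k : ι → ℤ) (g : G) (i : ι) :
    Atom.eval k (Atom.pow g i : Atom G ι) = g ^ k i := rfl

@[simp] lemma atom_carrier_const (a : G) : (Atom.const a : Atom G ι).carrier = a := rfl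

@[simp] lemma atom_carrier_pow (g : G) (i : ι) : (Atom.pow g i : Atom G ι).carrier = g := rfl

@[simp] lemma evalL_nil (k : ι → ℤ) : evalL k ([] : List (Atom G ι)) = 1 := rfl

@[simp] lemma evalL_cons (k : ι → ℤ) (t : Atom G ι) (L : List (Atom G ι)) :
    evalL k (t :: L) = Atom.eval k t * evalL k L := by
  simp [evalL]

@[simp] lemma evalL_append (k : ι → ℤ) (L₁ L₂ : List (Atom G ι)) :
    evalL k (L₁ ++ L₂) = evalL k L₁ * evalL k L₂ := by
  simp [evalL]

@[simp] lemma evalL_singleton_const (k : ι → ℤ) (c : G) :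
    evalL k [(Atom.const c : Atom G ι)] = c := by
  simp [evalL, Atom.eval]

lemma mem_varsL {L : List (Atom G ι)} {i : ι} : i ∈ varsL L ↔ ∃ g, Atom.pow g i ∈ L :=
  Iff.rfl

@[simp] lemma varsL_nil : varsL ([] : List (Atom G ι)) = ∅ := by
  ext i; simp [varsL]

lemma varsL_append (L₁ L₂ : List (Atom G ι)) :
    varsL (L₁ ++ L₂) = varsL L₁ ∪ varsL L₂ := by
  ext i; simp [varsL, or_and_right, exists_or]

lemma varsL_cons_const (c : G) (L : List (Atom G ι)) :
    varsL (Atom.const c :: L) = varsL L := by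
  ext i; simp [varsL]

@[simp] lemma varsL_singleton_const (c : G) : varsL [(Atom.const c : Atom G ι)] = ∅ := by
  rw [varsL_cons_const, varsL_nil]

@[simp] lemma varsL_singleton_pow (g : G) (i : ι) :
    varsL [(Atom.pow g i : Atom G ι)] = {i} := by
  ext x; simp [varsL, eq_comm]

lemma evalL_mem {μ : Λ} (k : ι → ℤ) {L : List (Atom G ι)}
    (h : ∀ t ∈ L, t.carrier ∈ H μ) : evalL k L ∈ H μ := by
  induction L with
  | nil => simpa using one_mem _
  | cons t L ih =>
    rw [evalL_cons]
    refine mul_mem ?_ (ih fun x hx => h x (List.mem_cons_of_mem _ hx))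
    have ht := h t (List.mem_cons_self)
    cases t with
    | const a => exact ht
    | pow g i => exact zpow_mem ht _

lemma evalL_congr {k k' : ι → ℤ} {L : List (Atom G ι)}
    (h : ∀ g i, Atom.pow g i ∉ L) : evalL k L = evalL k' L := by
  unfold evalL
  congr 1
  apply List.map_congr_left
  intro t ht
  cases t with
  | const a => rfl
  | pow g i => exact absurd ht (h g i)

/-! ### Items -/

inductive Item (G : Type*) {Λ : Type*} [Group G] (X : Set G) (H : Λ → Subgroup G)
    (ι : Type*) where
  | coef (l : RelLetter G X H) : Item G X H ι
  | block (W : List (Atom G ι)) (μ : Λ) : Item G X H ι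

namespace Item

def itemVal (k : ι → ℤ) : Item G X H ι → G
  | .coef l => l.val
  | .block W _ => evalL k W

def itemVars : Item G X H ι → Set ι
  | .coef _ => ∅
  | .block W _ => varsL W

def itemLam : Item G X H ι → Option Λ
  | .coef l => l.lamOf
  | .block _ μ => some μ

def itemGood : Item G X H ι → Prop
  | .coef _ => True
  | .block W μ => ∀ t ∈ W, t.carrier ∈ H μ

def atomPowB : Atom G ι → Bool
  | .pow _ _ => true
  | _ => false

def hasPowB (L : List (Atom G ι)) : Bool := L.any atomPowB

def isVarB : Item G X H ι → Bool
  | .block W _ => hasPowB W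
  | _ => false

def isCoefB : Item G X H ι → Bool
  | .coef _ => true
  | _ => false

def isBlockB : Item G X H ι → Bool
  | .coef _ => false
  | _ => true

end Item

open Item

def itemsProd (k : ι → ℤ) (its : List (Item G X H ι)) : G :=
  (its.map (itemVal k)).prod

@[simp] lemma itemsProd_nil (k : ι → ℤ) : itemsProd k ([] : List (Item G X H ι)) = 1 := rfl

@[simp] lemma itemsProd_cons (k : ι → ℤ) (it : Item G X H ι) (its : List (Item G X H ι)) :
    itemsProd k (it :: its) = itemVal k it * itemsProd k its := by
  simp [itemsProd]

@[simp] lemma itemsProd_append (k : ι → ℤ) (l₁ l₂ : List (Item G X H ι)) :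
    itemsProd k (l₁ ++ l₂) = itemsProd k l₁ * itemsProd k l₂ := by
  simp [itemsProd]

def Vn (its : List (Item G X H ι)) : ℕ := its.countP isVarB
def Cn (its : List (Item G X H ι)) : ℕ := its.countP isCoefB
def Bn (its : List (Item G X H ι)) : ℕ := its.countP isBlockB

def Good (its : List (Item G X H ι)) : Prop :=
  (∀ it ∈ its, itemGood it) ∧
  its.Pairwise fun A B => Disjoint (itemVars A) (itemVars B)

def varsItems (its : List (Item G X H ι)) : Set ι :=
  {i | ∃ it ∈ its, i ∈ itemVars it}

lemma varsItems_sub_of_sublist {l₁ l₂ : List (Item G X H ι)} (h : l₁.Sublist l₂) :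
    varsItems l₁ ⊆ varsItems l₂ := by
  rintro i ⟨it, hmem, hi⟩
  exact ⟨it, h.subset hmem, hi⟩

lemma varsItems_append (l₁ l₂ : List (Item G X H ι)) :
    varsItems (l₁ ++ l₂) = varsItems l₁ ∪ varsItems l₂ := by
  ext i; simp [varsItems, or_and_right, exists_or]

lemma varsItems_cons (it : Item G X H ι) (its : List (Item G X H ι)) :
    varsItems (it :: its) = itemVars it ∪ varsItems its := by
  ext i; simp [varsItems, or_and_right, exists_or]

@[simp] lemma varsItems_nil : varsItems ([] : List (Item G X H ι)) = ∅ := by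
  ext i; simp [varsItems]

lemma itemVars_sub_varsItems {it : Item G X H ι} {its : List (Item G X H ι)}
    (h : it ∈ its) : itemVars it ⊆ varsItems its :=
  fun i hi => ⟨it, h, hi⟩

lemma Good.sublist {l₁ l₂ : List (Item G X H ι)} (h : Good l₂) (hs : l₁.Sublist l₂) :
    Good l₁ :=
  ⟨fun it hit => h.1 it (hs.subset hit), h.2.sublist hs⟩

lemma disjoint_varsItems_left {L : List (Item G X H ι)} {s : Set ι}
    (h : ∀ it ∈ L, Disjoint (itemVars it) s) : Disjoint (varsItems L) s := by
  rw [Set.disjoint_left]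
  rintro i ⟨it, hmem, hi⟩
  exact (Set.disjoint_left.mp (h it hmem)) hi

/-! ### systems of equations -/

def sysVars (sys : List (ExpEq G ι)) : Set ι := {i | ∃ E ∈ sys, i ∈ E.vars}

@[simp] lemma sysVars_nil : sysVars ([] : List (ExpEq G ι)) = ∅ := by
  ext i; simp [sysVars]

lemma sysVars_append (s₁ s₂ : List (ExpEq G ι)) :
    sysVars (s₁ ++ s₂) = sysVars s₁ ∪ sysVars s₂ := by
  ext i; simp [sysVars, or_and_right, exists_or]

lemma vars_sub_sysVars {E : ExpEq G ι} {sys : List (ExpEq G ι)} (h : E ∈ sys) :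
    E.vars ⊆ sysVars sys := fun i hi => ⟨E, h, hi⟩

lemma sysVars_singleton (E : ExpEq G ι) : sysVars [E] = E.vars := by
  ext i; simp [sysVars]

lemma holds_mk {L : List (Atom G ι)} {k : ι → ℤ} :
    (ExpEq.mk L).holds k ↔ evalL k L = 1 := Iff.rfl

lemma vars_mk {L : List (Atom G ι)} : (ExpEq.mk L).vars = varsL L := rfl

lemma itemsProd_const_of_Vn_eq_zero {its : List (Item G X H ι)} (h : Vn its = 0)
    (k k' : ι → ℤ) : itemsProd k its = itemsProd k' its := by
  unfold itemsProd
  congr 1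
  apply List.map_congr_left
  intro it hit
  cases it with
  | coef l => rfl
  | block W μ =>
    show evalL k W = evalL k' W
    apply evalL_congr
    intro g i hmem
    have hW : hasPowB W = true := List.any_eq_true.mpr ⟨_, hmem, rfl⟩
    have : 0 < Vn its := List.countP_pos_iff.mpr ⟨_, hit, by simpa [isVarB] using hW⟩
    omega

lemma Vn_cons (it : Item G X H ι) (its : List (Item G X H ι)) :
    Vn (it :: its) = Vn its + (if isVarB it then 1 else 0) := List.countP_cons

lemma Cn_cons (it : Item G X H ι) (its : List (Item G X H ι)) :
    Cn (it :: its) = Cn its + (if isCoefB it then 1 else 0) := List.countP_cons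

lemma Bn_cons (it : Item G X H ι) (its : List (Item G X H ι)) :
    Bn (it :: its) = Bn its + (if isBlockB it then 1 else 0) := List.countP_cons

lemma Vn_le_Bn (its : List (Item G X H ι)) : Vn its ≤ Bn its := by
  apply List.countP_mono_left
  intro it _ h
  cases it with
  | coef l => simp [isVarB] at h
  | block W μ => rfl

end PfAux

namespace PfAux

open Item

variable {G Λ ι : Type*} [Group G] {X : Set G} {H : Λ → Subgroup G}

/-! ### words in the relative Cayley alphabet -/

def letterInv (hXsym : X = X⁻¹) : RelLetter G X H → RelLetter G X H
  | .ofX x hx => .ofX x⁻¹ (by rw [hXsym]; exact Set.inv_mem_inv.mpr hx)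
  | .ofH lam h hh => .ofH lam h⁻¹ (inv_mem hh)

lemma val_letterInv (hXsym : X = X⁻¹) (l : RelLetter G X H) :
    (letterInv hXsym l).val = l.val⁻¹ := by
  cases l <;> rfl

lemma prod_reverse_inv (hXsym : X = X⁻¹) (w : List (RelLetter G X H)) :
    (((w.map (letterInv hXsym)).reverse).map RelLetter.val).prod
      = ((w.map RelLetter.val).prod)⁻¹ := by
  have hm : (w.map (RelLetter.val ∘ letterInv hXsym)) = (w.map RelLetter.val).map (fun x => x⁻¹) := by
    rw [List.map_map]
    exact List.map_congr_left fun l _ => val_letterInv hXsym l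
  rw [List.map_reverse, List.map_map, hm, ← List.prod_inv_reverse]

lemma exists_word (hXsym : X = X⁻¹)
    (hgen : Subgroup.closure (X ∪ ⋃ lam, ((H lam : Subgroup G) : Set G)) = ⊤) (g : G) :
    ∃ w : List (RelLetter G X H), (w.map RelLetter.val).prod = g := by
  have hg : g ∈ Subgroup.closure (X ∪ ⋃ lam, ((H lam : Subgroup G) : Set G)) := by
    rw [hgen]; exact Subgroup.mem_top g
  induction hg using Subgroup.closure_induction with
  | mem x hx =>
    rcases hx with hx | hx
    · exact ⟨[.ofX x hx], by simp [RelLetter.val]⟩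
    · rcases Set.mem_iUnion.mp hx with ⟨lam, hx⟩
      exact ⟨[.ofH lam x hx], by simp [RelLetter.val]⟩
  | one => exact ⟨[], by simp⟩
  | mul x y _ _ ihx ihy =>
    rcases ihx with ⟨w₁, h₁⟩; rcases ihy with ⟨w₂, h₂⟩
    exact ⟨w₁ ++ w₂, by simp [h₁, h₂]⟩
  | inv x _ ihx =>
    rcases ihx with ⟨w, hw⟩
    exact ⟨(w.map (letterInv hXsym)).reverse, by rw [prod_reverse_inv, hw]⟩

lemma relMetric_le_of_word {ν : Λ} {h : G} (w : List (RelLetter G X H))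
    (hprod : (w.map RelLetter.val).prod = h)
    (hgood : ∀ j : Fin w.length,
      ¬((w.get j).lamOf = some ν ∧ pathVertex 1 w (j : ℕ) ∈ H ν)) :
    relMetric X H ν 1 h ≤ (w.length : ℕ∞) := by
  apply sInf_le
  exact ⟨w, by simpa using hprod, hgood, rfl⟩

/-! ### turning items into letters -/

open scoped Classical in
noncomputable def toLetter (hX1 : (1 : G) ∈ X) (k : ι → ℤ) :
    Item G X H ι → RelLetter G X H
  | .coef l => l
  | .block W μ =>
    if h : evalL k W ∈ H μ then RelLetter.ofH μ (evalL k W) h else RelLetter.ofX 1 hX1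

lemma val_toLetter (hX1 : (1 : G) ∈ X) (k : ι → ℤ) {it : Item G X H ι}
    (h : itemGood it) : (toLetter hX1 k it).val = itemVal k it := by
  cases it with
  | coef l => rfl
  | block W μ =>
    have hW : evalL k W ∈ H μ := evalL_mem k h
    simp [toLetter, hW, RelLetter.val, itemVal]

lemma lam_toLetter (hX1 : (1 : G) ∈ X) (k : ι → ℤ) {it : Item G X H ι}
    (h : itemGood it) : (toLetter hX1 k it).lamOf = itemLam it := by
  cases it with
  | coef l => rfl
  | block W μ =>
    have hW : evalL k W ∈ H μ := evalL_mem k h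
    simp [toLetter, hW, RelLetter.lamOf, itemLam]

lemma skel (hX1 : (1 : G) ∈ X) {its : List (Item G X H ι)}
    (hGood : ∀ it ∈ its, itemGood it) (ν : Λ) (k : ι → ℤ)
    (hns : ∀ j, (hj : j < its.length) →
      ¬(itemLam (its[j]'hj) = some ν ∧ itemsProd k (its.take j) ∈ H ν)) :
    relMetric X H ν 1 (itemsProd k its) ≤ (its.length : ℕ∞) := by
  set w := its.map (toLetter hX1 k) with hw
  have hlen : w.length = its.length := List.length_map _
  have hmapval : w.map RelLetter.val = its.map (itemVal k) := by
    rw [hw, List.map_map]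
    exact List.map_congr_left fun it hit => val_toLetter hX1 k (hGood it hit)
  have hprod : (w.map RelLetter.val).prod = itemsProd k its := by rw [hmapval]; rfl
  have hbad : ∀ j : Fin w.length,
      ¬((w.get j).lamOf = some ν ∧ pathVertex 1 w (j : ℕ) ∈ H ν) := ?_
  · have := relMetric_le_of_word (ν := ν) w hprod hbad
    rwa [hlen] at this
  intro j ⟨h1, h2⟩
  have hj : (j : ℕ) < its.length := hlen ▸ j.2
  refine hns j hj ⟨?_, ?_⟩
  · have hget : w.get j = toLetter hX1 k (its[(j : ℕ)]'hj) := by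
      simp [hw, List.getElem_map]
    rwa [hget, lam_toLetter hX1 k (hGood _ (List.getElem_mem hj))] at h1
  · have hv : pathVertex 1 w (j : ℕ) = itemsProd k (its.take j) := by
      unfold pathVertex itemsProd
      rw [one_mul, hmapval, ← List.map_take]
    rwa [hv] at h2

/-! ### decomposition and counting -/

lemma decomp {its : List (Item G X H ι)} {j : ℕ} (hj : j < its.length) :
    its = its.take j ++ (its[j]'hj) :: its.drop (j + 1) := by
  conv_lhs => rw [← List.take_append_drop j its]
  rw [List.drop_eq_getElem_cons hj]

lemma countP_decomp (p : Item G X H ι → Bool) {its : List (Item G X H ι)} {j : ℕ}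
    (hj : j < its.length) :
    its.countP p =
      (its.take j).countP p + ((if p (its[j]'hj) then 1 else 0)
        + (its.drop (j + 1)).countP p) := by
  conv_lhs => rw [decomp hj]
  rw [List.countP_append, List.countP_cons]
  omega

lemma good_decomp {its : List (Item G X H ι)} (hGood : Good its) {j : ℕ}
    (hj : j < its.length) :
    Good (its.take j) ∧ Good (its.drop (j + 1)) ∧ itemGood (its[j]'hj) ∧
    (∀ itA ∈ its.take j, Disjoint (itemVars itA) (itemVars (its[j]'hj))) ∧
    (∀ itA ∈ its.take j, ∀ itB ∈ its.drop (j + 1),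
      Disjoint (itemVars itA) (itemVars itB)) ∧
    (∀ itB ∈ its.drop (j + 1), Disjoint (itemVars (its[j]'hj)) (itemVars itB)) := by
  have h2 := hGood.2
  rw [decomp hj, List.pairwise_append, List.pairwise_cons] at h2
  obtain ⟨pwA, ⟨hxT, pwT⟩, hcross⟩ := h2
  refine ⟨⟨fun it hit => hGood.1 it ((List.take_sublist _ _).subset hit), pwA⟩,
    ⟨fun it hit => hGood.1 it ((List.drop_sublist _ _).subset hit), pwT⟩,
    hGood.1 _ (List.getElem_mem hj), ?_, ?_, hxT⟩
  · intro itA hA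
    exact hcross itA hA _ (List.mem_cons_self)
  · intro itA hA itB hB
    exact hcross itA hA itB (List.mem_cons_of_mem _ hB)

lemma varsItems_decomp {its : List (Item G X H ι)} {j : ℕ} (hj : j < its.length) :
    varsItems its =
      varsItems (its.take j) ∪ (itemVars (its[j]'hj) ∪ varsItems (its.drop (j + 1))) := by
  conv_lhs => rw [decomp hj]
  rw [varsItems_append, varsItems_cons]

/-! ### lexicographic measure -/

def rel3 (A B : List (Item G X H ι)) : Prop :=
  Prod.Lex (· < ·) (Prod.Lex (· < ·) (· < ·)) (Vn A, Cn A, Bn A) (Vn B, Cn B, Bn B)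

lemma rel3_wf : WellFounded (rel3 (G := G) (X := X) (H := H) (ι := ι)) :=
  InvImage.wf (fun its => (Vn its, Cn its, Bn its))
    ((Nat.lt_wfRel.wf).prod_lex ((Nat.lt_wfRel.wf).prod_lex Nat.lt_wfRel.wf))

lemma rel3_of {A B : List (Item G X H ι)}
    (h : Vn A < Vn B ∨ (Vn A ≤ Vn B ∧ Cn A < Cn B) ∨
      (Vn A ≤ Vn B ∧ Cn A ≤ Cn B ∧ Bn A < Bn B)) : rel3 A B := by
  unfold rel3
  rcases h with h | ⟨ha, hb⟩ | ⟨ha, hb, hc⟩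
  · exact Prod.Lex.left _ _ h
  · rcases lt_or_eq_of_le ha with h | h
    · exact Prod.Lex.left _ _ h
    · rw [h]; exact Prod.Lex.right _ (Prod.Lex.left _ _ hb)
  · rcases lt_or_eq_of_le ha with h | h
    · exact Prod.Lex.left _ _ h
    · rw [h]
      rcases lt_or_eq_of_le hb with h' | h'
      · exact Prod.Lex.right _ (Prod.Lex.left _ _ h')
      · rw [h']; exact Prod.Lex.right _ (Prod.Lex.right _ hc)

/-! ### a group identity -/

lemma grp_iff (c P w Tt : G) : Tt * c⁻¹ * P * w = 1 ↔ P * w * Tt = c := by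
  constructor
  · intro h
    have h2 : c * (Tt⁻¹ * (Tt * c⁻¹ * P * w) * Tt) = c * (Tt⁻¹ * 1 * Tt) := by rw [h]
    calc P * w * Tt = c * (Tt⁻¹ * (Tt * c⁻¹ * P * w) * Tt) := by group
    _ = c * (Tt⁻¹ * 1 * Tt) := h2
    _ = c := by group
  · intro h
    calc Tt * c⁻¹ * P * w = Tt * c⁻¹ * (P * w * Tt) * Tt⁻¹ := by group
    _ = Tt * c⁻¹ * c * Tt⁻¹ := by rw [h]
    _ = 1 := by group

end PfAux

namespace PfAux

open Item

variable {G Λ ι : Type*} [Group G] {X : Set G} {H : Λ → Subgroup G}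

@[simp] lemma itemVal_coef (k : ι → ℤ) (l : RelLetter G X H) :
    itemVal (ι := ι) k (Item.coef l) = l.val := rfl
@[simp] lemma itemVal_block (k : ι → ℤ) (W : List (Atom G ι)) (μ : Λ) :
    itemVal k (Item.block (X := X) (H := H) W μ) = evalL k W := rfl
@[simp] lemma itemVars_coef (l : RelLetter G X H) :
    itemVars (ι := ι) (Item.coef l) = ∅ := rfl
@[simp] lemma itemVars_block (W : List (Atom G ι)) (μ : Λ) :
    itemVars (Item.block (X := X) (H := H) W μ) = varsL W := rfl
@[simp] lemma itemLam_coef (l : RelLetter G X H) :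
    itemLam (ι := ι) (Item.coef l) = l.lamOf := rfl
@[simp] lemma itemLam_block (W : List (Atom G ι)) (μ : Λ) :
    itemLam (Item.block (X := X) (H := H) W μ) = some μ := rfl
lemma itemGood_block {W : List (Atom G ι)} {μ : Λ} :
    itemGood (Item.block (X := X) (H := H) W μ) ↔ ∀ t ∈ W, t.carrier ∈ H μ := Iff.rfl
@[simp] lemma isVarB_coef (l : RelLetter G X H) :
    isVarB (ι := ι) (Item.coef l) = false := rfl
@[simp] lemma isVarB_block (W : List (Atom G ι)) (μ : Λ) :
    isVarB (Item.block (X := X) (H := H) W μ) = hasPowB W := rfl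
@[simp] lemma isCoefB_coef (l : RelLetter G X H) :
    isCoefB (ι := ι) (Item.coef l) = true := rfl
@[simp] lemma isCoefB_block (W : List (Atom G ι)) (μ : Λ) :
    isCoefB (Item.block (X := X) (H := H) W μ) = false := rfl
@[simp] lemma isBlockB_coef (l : RelLetter G X H) :
    isBlockB (ι := ι) (Item.coef l) = false := rfl
@[simp] lemma isBlockB_block (W : List (Atom G ι)) (μ : Λ) :
    isBlockB (Item.block (X := X) (H := H) W μ) = true := rfl
@[simp] lemma val_ofX (x : G) (hx : x ∈ X) :
    (RelLetter.ofX (H := H) x hx).val = x := rfl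
@[simp] lemma val_ofH (lam : Λ) (h : G) (hh : h ∈ H lam) :
    (RelLetter.ofH (X := X) lam h hh).val = h := rfl
@[simp] lemma lamOf_ofX (x : G) (hx : x ∈ X) :
    (RelLetter.ofX (H := H) x hx).lamOf = none := rfl
@[simp] lemma lamOf_ofH (lam : Λ) (h : G) (hh : h ∈ H lam) :
    (RelLetter.ofH (X := X) lam h hh).lamOf = some lam := rfl

lemma hasPowB_append (L₁ L₂ : List (Atom G ι)) :
    hasPowB (L₁ ++ L₂) = (hasPowB L₁ || hasPowB L₂) := List.any_append

@[simp] lemma hasPowB_singleton_const (c : G) :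
    hasPowB [(Atom.const c : Atom G ι)] = false := rfl

lemma varsL_nonempty_of_hasPow {L : List (Atom G ι)} (h : hasPowB L = true) :
    ∃ i, i ∈ varsL L := by
  rcases List.any_eq_true.mp h with ⟨t, ht, hpow⟩
  cases t with
  | const a => simp [atomPowB] at hpow
  | pow g i => exact ⟨i, g, ht⟩

lemma Vn_pos_of_hasPow {e : List (Atom G ι)} {L : List (Item G X H ι)}
    (h : hasPowB e = true) (hsub : varsL e ⊆ varsItems L) : 0 < Vn L := by
  obtain ⟨i, hi⟩ := varsL_nonempty_of_hasPow h
  obtain ⟨it, hmem, hit⟩ := hsub hi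
  apply List.countP_pos_iff.mpr
  refine ⟨it, hmem, ?_⟩
  cases it with
  | coef l => simp [itemVars] at hit
  | block W μ =>
    rw [itemVars_block, mem_varsL] at hit
    obtain ⟨g, hg⟩ := hit
    rw [isVarB_block]
    exact List.any_eq_true.mpr ⟨_, hg, rfl⟩

lemma disjoint_varsItems_both {L₁ L₂ : List (Item G X H ι)}
    (h : ∀ a ∈ L₁, ∀ b ∈ L₂, Disjoint (itemVars a) (itemVars b)) :
    Disjoint (varsItems L₁) (varsItems L₂) := by
  apply disjoint_varsItems_left
  intro a ha
  exact (disjoint_varsItems_left fun b hb => (h a ha b hb).symm).symm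

lemma itemsProd_decomp (k : ι → ℤ) {its : List (Item G X H ι)} {j : ℕ}
    (hj : j < its.length) :
    itemsProd k its =
      itemsProd k (its.take j) * (itemVal k (its[j]'hj) * itemsProd k (its.drop (j + 1))) := by
  conv_lhs => rw [decomp hj]
  rw [itemsProd_append, itemsProd_cons]

lemma grp_iff' (c P w Tt : G) : Tt * (c⁻¹ * P) * w = 1 ↔ P * (w * Tt) = c := by
  constructor
  · intro h
    have h2 : c * (Tt⁻¹ * (Tt * (c⁻¹ * P) * w) * Tt) = c * (Tt⁻¹ * 1 * Tt) := by rw [h]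
    calc P * (w * Tt) = c * (Tt⁻¹ * (Tt * (c⁻¹ * P) * w) * Tt) := by group
    _ = c * (Tt⁻¹ * 1 * Tt) := h2
    _ = c := by group
  · intro h
    calc Tt * (c⁻¹ * P) * w = Tt * c⁻¹ * (P * (w * Tt)) * Tt⁻¹ := by group
    _ = Tt * c⁻¹ * c * Tt⁻¹ := by rw [h]
    _ = 1 := by group

/-- The property of a branch `b = (system, value-expression)`. -/
structure BrOK (ν : Λ) (its : List (Item G X H ι))
    (b : List (ExpEq G ι) × List (Atom G ι)) : Prop where
  pw : b.1.Pairwise ExpEq.Indep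
  isOver : ∀ E ∈ b.1, ∃ μ : Λ, E.isOver (H μ : Set G)
  car : ∀ t ∈ b.2, t.carrier ∈ H ν
  disj : Disjoint (varsL b.2) (sysVars b.1)
  esub : varsL b.2 ⊆ varsItems its
  ssub : sysVars b.1 ⊆ varsItems its
  val : ∀ k, (∀ E ∈ b.1, E.holds k) → itemsProd k its = evalL k b.2

theorem main (hXsym : X = X⁻¹) (hX1 : (1 : G) ∈ X) (hemb : IsHypEmbedded X H) :
    ∀ its : List (Item G X H ι), Good its → ∀ ν : Λ,
    ∃ brs : List (List (ExpEq G ι) × List (Atom G ι)),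
      (∀ b ∈ brs, BrOK ν its b) ∧
      ∀ k : ι → ℤ, (itemsProd k its ∈ H ν ↔ ∃ b ∈ brs, ∀ E ∈ b.1, E.holds k) := by
  intro its0
  refine rel3_wf.induction
    (C := fun its => Good its → ∀ ν : Λ,
      ∃ brs : List (List (ExpEq G ι) × List (Atom G ι)),
        (∀ b ∈ brs, BrOK ν its b) ∧
        ∀ k : ι → ℤ, (itemsProd k its ∈ H ν ↔ ∃ b ∈ brs, ∀ E ∈ b.1, E.holds k))
    its0 ?_
  clear its0
  intro its IH hGood ν
  by_cases hV : Vn its = 0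
  · -- base case: the product is constant
    have hconst : ∀ k k' : ι → ℤ, itemsProd k its = itemsProd k' its :=
      fun k k' => itemsProd_const_of_Vn_eq_zero hV k k'
    by_cases hcH : itemsProd (fun _ => 0) its ∈ H ν
    · refine ⟨[([], [Atom.const (itemsProd (fun _ => 0) its)])], ?_, ?_⟩
      · rintro b hb
        rw [List.mem_singleton] at hb
        subst hb
        refine ⟨List.Pairwise.nil, by simp, ?_, by simp, by simp, by simp [sysVars], ?_⟩
        · intro t ht
          rw [List.mem_singleton] at ht
          subst ht
          exact hcH
        · intro k _
          rw [hconst k (fun _ => 0)]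
          simp
      · intro k
        constructor
        · intro _
          exact ⟨_, List.mem_singleton_self _, by simp⟩
        · intro _
          rw [hconst k (fun _ => 0)]
          exact hcH
    · refine ⟨[], by simp, fun k => ⟨fun hmem => ?_, fun h => ?_⟩⟩
      · rw [hconst k (fun _ => 0)] at hmem
        exact absurd hmem hcH
      · simp at h
  -- main case
  have hpos : 0 < Vn its := Nat.pos_of_ne_zero hV
  obtain ⟨itst, hmemst, hvarst⟩ := List.countP_pos_iff.mp hpos
  obtain ⟨jst, hjst, hjeq⟩ := List.getElem_of_mem hmemst
  obtain ⟨Wst, μst, hWμ⟩ : ∃ W μ, itst = Item.block (X := X) W μ := by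
    cases itst with
    | coef l => simp [isVarB] at hvarst
    | block W μ => exact ⟨W, μ, rfl⟩
  have hBall : ∀ c : G, c ∈ H ν →
      ∃ brsc : List (List (ExpEq G ι) × List (Atom G ι)), (∀ b ∈ brsc, BrOK ν its b) ∧
        ∀ k : ι → ℤ, (itemsProd k its = c ↔ ∃ b ∈ brsc, ∀ E ∈ b.1, E.holds k) := by
    intro c hcH
    obtain ⟨gA, gT, gJ, dAj, dAT, dJT⟩ := good_decomp hGood hjst
    have hJvars : itemVars (its[jst]'hjst) = varsL Wst := by
      rw [hjeq, hWμ, itemVars_block]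
    have hJgood : ∀ t ∈ Wst, t.carrier ∈ H μst := by
      have := gJ; rw [hjeq, hWμ] at this; exact this
    have hita_good : Good (its.drop (jst + 1)
        ++ Item.coef (RelLetter.ofH ν c⁻¹ (inv_mem hcH)) :: its.take jst) := by
      constructor
      · intro it hit
        rcases List.mem_append.mp hit with hit | hit
        · exact gT.1 it hit
        · rcases List.mem_cons.mp hit with rfl | hit
          · trivial
          · exact gA.1 it hit
      · rw [List.pairwise_append]
        refine ⟨gT.2, ?_, ?_⟩
        · rw [List.pairwise_cons]
          exact ⟨fun itB hB => by simp, gA.2⟩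
        · intro x hx y hy
          rcases List.mem_cons.mp hy with rfl | hy
          · simp
          · exact (dAT y hy x hx).symm
    have hrel : rel3 (its.drop (jst + 1)
        ++ Item.coef (RelLetter.ofH ν c⁻¹ (inv_mem hcH)) :: its.take jst) its := by
      apply rel3_of
      left
      have h1 := countP_decomp (isVarB (ι := ι)) hjst
      have h3 : isVarB (its[jst]'hjst) = true := by rw [hjeq]; exact hvarst
      rw [h3] at h1
      simp only [if_true] at h1
      have h2 : Vn (its.drop (jst + 1)
          ++ Item.coef (RelLetter.ofH ν c⁻¹ (inv_mem hcH)) :: its.take jst)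
          = Vn (its.drop (jst + 1)) + Vn (its.take jst) := by
        unfold Vn
        rw [List.countP_append, List.countP_cons]
        simp
      unfold Vn at *
      omega
    obtain ⟨brsI, hI1, hI2⟩ := IH _ hrel hita_good μst
    have hwmem : ∀ k : ι → ℤ, evalL k Wst ∈ H μst := fun k => evalL_mem k hJgood
    have hprod_ita : ∀ k : ι → ℤ,
        itemsProd k (its.drop (jst + 1)
          ++ Item.coef (RelLetter.ofH ν c⁻¹ (inv_mem hcH)) :: its.take jst)
        = itemsProd k (its.drop (jst + 1)) * (c⁻¹ * itemsProd k (its.take jst)) := by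
      intro k; simp
    have hprod_its : ∀ k : ι → ℤ, itemsProd k its
        = itemsProd k (its.take jst) * (evalL k Wst * itemsProd k (its.drop (jst + 1))) := by
      intro k
      rw [itemsProd_decomp k hjst, hjeq, hWμ, itemVal_block]
    have hkey : ∀ k : ι → ℤ,
        (itemsProd k (its.drop (jst + 1)
            ++ Item.coef (RelLetter.ofH ν c⁻¹ (inv_mem hcH)) :: its.take jst)
          * evalL k Wst = 1 ↔ itemsProd k its = c) := by
      intro k
      rw [hprod_ita, hprod_its]
      exact grp_iff' c _ _ _
    have hsubA : varsItems (its.drop (jst + 1)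
        ++ Item.coef (RelLetter.ofH ν c⁻¹ (inv_mem hcH)) :: its.take jst)
        = varsItems (its.drop (jst + 1)) ∪ varsItems (its.take jst) := by
      rw [varsItems_append, varsItems_cons, itemVars_coef]
      simp
    have hsubIts : varsItems (its.drop (jst + 1)
        ++ Item.coef (RelLetter.ofH ν c⁻¹ (inv_mem hcH)) :: its.take jst)
        ⊆ varsItems its := by
      rw [hsubA, varsItems_decomp hjst]
      intro i hi
      rcases hi with hi | hi
      · exact Or.inr (Or.inr hi)
      · exact Or.inl hi
    have hWstsub : varsL Wst ⊆ varsItems its := by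
      rw [varsItems_decomp hjst, ← hJvars]
      intro i hi
      exact Or.inr (Or.inl hi)
    have hWstdisj : Disjoint (varsL Wst)
        (varsItems (its.drop (jst + 1)
          ++ Item.coef (RelLetter.ofH ν c⁻¹ (inv_mem hcH)) :: its.take jst)) := by
      rw [hsubA, Set.disjoint_union_right, ← hJvars]
      constructor
      · exact (disjoint_varsItems_left (fun itB hB => (dJT itB hB).symm)).symm
      · exact (disjoint_varsItems_left dAj).symm
    refine ⟨brsI.map (fun γ => (γ.1 ++ [ExpEq.mk (γ.2 ++ Wst)], [Atom.const c])), ?_, ?_⟩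
    · rintro b hb
      rw [List.mem_map] at hb
      obtain ⟨γ, hγ, rfl⟩ := hb
      obtain ⟨pwγ, ovγ, carγ, disjγ, esubγ, ssubγ, valγ⟩ := hI1 γ hγ
      constructor
      · -- pairwise
        rw [List.pairwise_append]
        refine ⟨pwγ, List.pairwise_singleton _ _, ?_⟩
        intro E hE F hF
        rw [List.mem_singleton] at hF
        subst hF
        show Disjoint E.vars (ExpEq.mk (γ.2 ++ Wst)).vars
        have hrw : (ExpEq.mk (γ.2 ++ Wst)).vars = varsL γ.2 ∪ varsL Wst := varsL_append _ _
        rw [hrw, Set.disjoint_union_right]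
        constructor
        · exact (disjγ.symm).mono_left (vars_sub_sysVars hE)
        · exact (hWstdisj.symm).mono_left ((vars_sub_sysVars hE).trans ssubγ)
      · -- over
        intro E hE
        rcases List.mem_append.mp hE with hE | hE
        · exact ovγ E hE
        · rw [List.mem_singleton] at hE
          subst hE
          refine ⟨μst, ?_⟩
          intro t ht
          rcases List.mem_append.mp ht with ht | ht
          · exact carγ t ht
          · exact hJgood t ht
      · -- car
        intro t ht
        rw [List.mem_singleton] at ht
        subst ht
        exact hcH
      · simp
      · simp
      · -- ssub
        rw [sysVars_append, sysVars_singleton, vars_mk, varsL_append]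
        intro i hi
        rcases hi with hi | hi | hi
        · exact hsubIts (ssubγ hi)
        · exact hsubIts (esubγ hi)
        · exact hWstsub hi
      · -- val
        intro k hold
        have hsysγ : ∀ E ∈ γ.1, E.holds k := fun E hE => hold E (List.mem_append_left _ hE)
        have hmk := hold _ (List.mem_append_right _ (List.mem_singleton_self _))
        rw [holds_mk, evalL_append] at hmk
        rw [← valγ k hsysγ] at hmk
        rw [(hkey k).mp hmk]
        simp
    · intro k
      constructor
      · intro hc
        have hQw := (hkey k).mpr hc
        have hQmem : itemsProd k (its.drop (jst + 1)
            ++ Item.coef (RelLetter.ofH ν c⁻¹ (inv_mem hcH)) :: its.take jst) ∈ H μst := by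
          rw [mul_eq_one_iff_eq_inv.mp hQw]
          exact inv_mem (hwmem k)
        obtain ⟨γ, hγ, hsys⟩ := (hI2 k).mp hQmem
        refine ⟨_, List.mem_map.mpr ⟨γ, hγ, rfl⟩, ?_⟩
        intro E hE
        rcases List.mem_append.mp hE with hE | hE
        · exact hsys E hE
        · rw [List.mem_singleton] at hE
          subst hE
          rw [holds_mk, evalL_append, ← (hI1 γ hγ).val k hsys]
          exact hQw
      · rintro ⟨b, hb, hold⟩
        rw [List.mem_map] at hb
        obtain ⟨γ, hγ, rfl⟩ := hb
        have hsysγ : ∀ E ∈ γ.1, E.holds k := fun E hE => hold E (List.mem_append_left _ hE)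
        have hmk := hold _ (List.mem_append_right _ (List.mem_singleton_self _))
        rw [holds_mk, evalL_append, ← (hI1 γ hγ).val k hsysγ] at hmk
        exact (hkey k).mp hmk

  have hSlot : ∀ j, (hj : j < its.length) →
      ∃ brsj : List (List (ExpEq G ι) × List (Atom G ι)), (∀ b ∈ brsj, BrOK ν its b) ∧
        ∀ k : ι → ℤ,
          ((itemLam (its[j]'hj) = some ν ∧ itemsProd k (its.take j) ∈ H ν)
              ∧ itemsProd k its ∈ H ν
            ↔ ∃ b ∈ brsj, ∀ E ∈ b.1, E.holds k) := by
    intro j hj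
    by_cases hlam : itemLam (its[j]'hj) = some ν
    case neg =>
      exact ⟨[], by simp, fun k => ⟨fun h => absurd h.1.1 hlam, fun h => by simp at h⟩⟩
    obtain ⟨gA, gT, gJ, dAj, dAT, dJT⟩ := good_decomp hGood hj
    have hAsubIts : varsItems (its.take j) ⊆ varsItems its :=
      varsItems_sub_of_sublist (List.take_sublist _ _)
    have hTsubIts : varsItems (its.drop (j + 1)) ⊆ varsItems its :=
      varsItems_sub_of_sublist (List.drop_sublist _ _)
    have dAJ' : Disjoint (varsItems (its.take j)) (itemVars (its[j]'hj)) :=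
      disjoint_varsItems_left dAj
    have dATv : Disjoint (varsItems (its.take j)) (varsItems (its.drop (j + 1))) :=
      disjoint_varsItems_both dAT
    have dJTv : Disjoint (itemVars (its[j]'hj)) (varsItems (its.drop (j + 1))) :=
      (disjoint_varsItems_left fun itB hB => (dJT itB hB).symm).symm
    have hcV := countP_decomp (isVarB (G := G) (Λ := Λ) (X := X) (H := H) (ι := ι)) hj
    have hcC := countP_decomp (isCoefB (G := G) (Λ := Λ) (X := X) (H := H) (ι := ι)) hj
    have hcB := countP_decomp (isBlockB (G := G) (Λ := Λ) (X := X) (H := H) (ι := ι)) hj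
    have hCommon : ∀ Wj' : List (Atom G ι),
        (∀ t ∈ Wj', t.carrier ∈ H ν) →
        (∀ k : ι → ℤ, itemVal k (its[j]'hj) = evalL k Wj') →
        varsL Wj' ⊆ itemVars (its[j]'hj) →
        rel3 (its.take j) its →
        (∀ e : List (Atom G ι), varsL e ⊆ varsItems (its.take j) →
          rel3 (Item.block (e ++ Wj') ν :: its.drop (j + 1)) its) →
        ∃ brsj : List (List (ExpEq G ι) × List (Atom G ι)),
          (∀ b ∈ brsj, BrOK ν its b) ∧
          ∀ k : ι → ℤ,
            ((itemLam (its[j]'hj) = some ν ∧ itemsProd k (its.take j) ∈ H ν)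
                ∧ itemsProd k its ∈ H ν
              ↔ ∃ b ∈ brsj, ∀ E ∈ b.1, E.holds k) := by
      intro Wj' hcar hval hvars hrelA hrelO
      obtain ⟨brsI, hI1, hI2⟩ := IH _ hrelA gA ν
      have hOut : ∀ γ, γ ∈ brsI →
          ∃ brs : List (List (ExpEq G ι) × List (Atom G ι)),
            (∀ b ∈ brs, BrOK ν (Item.block (γ.2 ++ Wj') ν :: its.drop (j + 1)) b) ∧
            ∀ k : ι → ℤ,
              (itemsProd k (Item.block (γ.2 ++ Wj') ν :: its.drop (j + 1)) ∈ H ν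
                ↔ ∃ b ∈ brs, ∀ E ∈ b.1, E.holds k) := by
        intro γ hγ
        apply IH _ (hrelO γ.2 (hI1 γ hγ).esub)
        constructor
        · intro it hit
          rcases List.mem_cons.mp hit with rfl | hit
          · intro t ht
            rcases List.mem_append.mp ht with ht | ht
            · exact (hI1 γ hγ).car t ht
            · exact hcar t ht
          · exact gT.1 it hit
        · rw [List.pairwise_cons]
          refine ⟨?_, gT.2⟩
          intro itB hB
          rw [itemVars_block, varsL_append, Set.disjoint_union_left]
          constructor
          · refine Disjoint.mono_left (hI1 γ hγ).esub ?_
            exact disjoint_varsItems_left fun itA hA => dAT itA hA itB hB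
          · refine Disjoint.mono_left hvars ?_
            exact dJT itB hB
      choose fO hO1 hO2 using hOut
      have hprodOut : ∀ (γ : List (ExpEq G ι) × List (Atom G ι)) (k : ι → ℤ),
          itemsProd k (Item.block (γ.2 ++ Wj') ν :: its.drop (j + 1))
            = evalL k γ.2 * (evalL k Wj' * itemsProd k (its.drop (j + 1))) := by
        intro γ k
        rw [itemsProd_cons, itemVal_block, evalL_append, mul_assoc]
      have hEq : ∀ γ, γ ∈ brsI → ∀ k : ι → ℤ, (∀ E ∈ γ.1, E.holds k) →
          itemsProd k its = itemsProd k (Item.block (γ.2 ++ Wj') ν :: its.drop (j + 1)) := by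
        intro γ hγ k hsys
        rw [itemsProd_decomp k hj, hval k, (hI1 γ hγ).val k hsys, hprodOut]
      refine ⟨brsI.attach.flatMap (fun γ => (fO γ.1 γ.2).map fun δ => (γ.1.1 ++ δ.1, δ.2)), ?_, ?_⟩
      · rintro b hb
        rw [List.mem_flatMap] at hb
        obtain ⟨⟨γ, hγ⟩, -, hb⟩ := hb
        rw [List.mem_map] at hb
        obtain ⟨δ, hδ, rfl⟩ := hb
        obtain ⟨pwδ, ovδ, carδ, disjδ, esubδ, ssubδ, valδ⟩ := hO1 γ hγ δ hδ
        obtain ⟨pwγ, ovγ, carγ, disjγ, esubγ, ssubγ, valγ⟩ := hI1 γ hγ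
        have hvOut : varsItems (Item.block (γ.2 ++ Wj') ν :: its.drop (j + 1))
            = (varsL γ.2 ∪ varsL Wj') ∪ varsItems (its.drop (j + 1)) := by
          rw [varsItems_cons, itemVars_block, varsL_append]
        have hOutSubIts :
            varsItems (Item.block (γ.2 ++ Wj') ν :: its.drop (j + 1)) ⊆ varsItems its := by
          rw [hvOut, varsItems_decomp hj]
          intro i hi
          rcases hi with (hi | hi) | hi
          · exact Or.inl (esubγ hi)
          · exact Or.inr (Or.inl (hvars hi))
          · exact Or.inr (Or.inr hi)
        have hdOut : Disjoint (varsItems (Item.block (γ.2 ++ Wj') ν :: its.drop (j + 1)))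
            (sysVars γ.1) := by
          rw [hvOut, Set.disjoint_union_left, Set.disjoint_union_left]
          refine ⟨⟨disjγ, ?_⟩, ?_⟩
          · exact Disjoint.mono hvars ssubγ dAJ'.symm
          · exact Disjoint.mono_right ssubγ dATv.symm
        constructor
        · rw [List.pairwise_append]
          refine ⟨pwγ, pwδ, ?_⟩
          intro E hE F hF
          exact Disjoint.mono ((vars_sub_sysVars hE)) ((vars_sub_sysVars hF).trans ssubδ)
            hdOut.symm
        · intro E hE
          rcases List.mem_append.mp hE with hE | hE
          · exact ovγ E hE
          · exact ovδ E hE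
        · exact carδ
        · rw [sysVars_append, Set.disjoint_union_right]
          exact ⟨Disjoint.mono_left esubδ hdOut, disjδ⟩
        · exact esubδ.trans hOutSubIts
        · rw [sysVars_append]
          exact Set.union_subset (ssubγ.trans hAsubIts) (ssubδ.trans hOutSubIts)
        · intro k hold
          have hsysγ : ∀ E ∈ γ.1, E.holds k := fun E hE => hold E (List.mem_append_left _ hE)
          have hsysδ : ∀ E ∈ δ.1, E.holds k := fun E hE => hold E (List.mem_append_right _ hE)
          rw [hEq γ hγ k hsysγ]
          exact valδ k hsysδ
      · intro k
        constructor
        · rintro ⟨⟨-, hC⟩, hP⟩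
          obtain ⟨γ, hγ, hsysγ⟩ := (hI2 k).mp hC
          have hPo : itemsProd k (Item.block (γ.2 ++ Wj') ν :: its.drop (j + 1)) ∈ H ν := by
            rw [← hEq γ hγ k hsysγ]
            exact hP
          obtain ⟨δ, hδ, hsysδ⟩ := (hO2 γ hγ k).mp hPo
          refine ⟨(γ.1 ++ δ.1, δ.2), ?_, ?_⟩
          · rw [List.mem_flatMap]
            exact ⟨⟨γ, hγ⟩, List.mem_attach _ _, List.mem_map.mpr ⟨δ, hδ, rfl⟩⟩
          · intro E hE
            rcases List.mem_append.mp hE with hE | hE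
            · exact hsysγ E hE
            · exact hsysδ E hE
        · rintro ⟨b, hb, hold⟩
          rw [List.mem_flatMap] at hb
          obtain ⟨⟨γ, hγ⟩, -, hb⟩ := hb
          rw [List.mem_map] at hb
          obtain ⟨δ, hδ, rfl⟩ := hb
          have hsysγ : ∀ E ∈ γ.1, E.holds k := fun E hE => hold E (List.mem_append_left _ hE)
          have hsysδ : ∀ E ∈ δ.1, E.holds k := fun E hE => hold E (List.mem_append_right _ hE)
          have hC : itemsProd k (its.take j) ∈ H ν := by
            rw [(hI1 γ hγ).val k hsysγ]
            exact evalL_mem k (hI1 γ hγ).car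
          have hP : itemsProd k its ∈ H ν := by
            rw [hEq γ hγ k hsysγ]
            exact (hO2 γ hγ k).mpr ⟨δ, hδ, hsysδ⟩
          exact ⟨⟨hlam, hC⟩, hP⟩
    -- case analysis on the item at position j
    cases hit : its[j]'hj with
    | coef l =>
      cases l with
      | ofX x hx =>
        rw [hit] at hlam
        simp at hlam
      | ofH μ s hs =>
        rw [hit] at hlam
        simp at hlam
        rw [← hit]
        apply hCommon [Atom.const s]
        · intro t ht
          rw [List.mem_singleton] at ht
          subst ht
          exact hlam ▸ hs
        · intro k
          rw [hit]
          simp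
        · simp
        · -- rel3 take
          apply rel3_of
          right; left
          rw [hit] at hcV hcC
          simp only [isVarB_coef, isCoefB_coef, if_false, if_true, Bool.false_eq_true] at hcV hcC
          unfold Vn Cn at *
          omega
        · intro e he
          apply rel3_of
          right; left
          constructor
          · -- Vn bound
            rw [Vn_cons]
            rw [hit] at hcV
            simp only [isVarB_coef, Bool.false_eq_true, if_false] at hcV
            simp only [isVarB_block, hasPowB_append, hasPowB_singleton_const, Bool.or_false]
            have hposA : hasPowB e = true → 0 < Vn (its.take j) :=
              fun hpe => Vn_pos_of_hasPow hpe he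
            rcases Bool.eq_false_or_eq_true (hasPowB e) with hpe | hpe <;>
              simp only [hpe, Bool.false_eq_true, if_false, if_true]
            · have h0 := hposA hpe
              unfold Vn at *
              omega
            · unfold Vn at *
              omega
          · rw [Cn_cons]
            rw [hit] at hcC
            simp only [isCoefB_coef, if_true, isCoefB_block, Bool.false_eq_true, if_false] at hcC ⊢
            unfold Cn at *
            omega
    | block Wj μj =>
      rw [hit] at hlam
      simp at hlam
      rw [hlam] at hit
      rw [hlam, ← hit]
      have hJgood : ∀ t ∈ Wj, t.carrier ∈ H ν := by
        have := gJ; rwa [hit] at this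
      by_cases hBnA : Bn (its.take j) = 0
      · -- S1: no blocks before j
        have hVnA : Vn (its.take j) = 0 := by
          have := Vn_le_Bn (its.take j)
          omega
        have hconstA : ∀ k : ι → ℤ,
            itemsProd k (its.take j) = itemsProd (fun _ => 0) (its.take j) :=
          fun k => itemsProd_const_of_Vn_eq_zero hVnA k _
        by_cases hcH : itemsProd (fun _ => 0) (its.take j) ∈ H ν
        case neg =>
          refine ⟨[], by simp, fun k => ⟨fun h => ?_, fun h => by simp at h⟩⟩
          refine absurd ?_ hcH
          rw [← hconstA k]
          exact h.1.2
        case pos =>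
          have hrelT : rel3 (its.drop (j + 1)) its := by
            apply rel3_of
            right; right
            rw [hit] at hcV hcC hcB
            simp only [isVarB_block, isCoefB_block, isBlockB_block, Bool.false_eq_true,
              if_false, if_true] at hcV hcC hcB
            unfold Vn Cn Bn at *
            refine ⟨by omega, by omega, by rcases Bool.eq_false_or_eq_true (hasPowB Wj) with hw | hw <;> simp [hw] at hcV <;> omega⟩
          obtain ⟨brsD, hD1, hD2⟩ := IH _ hrelT gT ν
          have hWjmem : ∀ k : ι → ℤ, evalL k Wj ∈ H ν := fun k => evalL_mem k hJgood
          have hprodd : ∀ k : ι → ℤ, itemsProd k its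
              = itemsProd (fun _ => 0) (its.take j)
                * (evalL k Wj * itemsProd k (its.drop (j + 1))) := by
            intro k
            rw [itemsProd_decomp k hj, hconstA k, hit, itemVal_block]
          have hWjv : varsL Wj = itemVars (its[j]'hj) := by rw [hit, itemVars_block]
          refine ⟨brsD.map fun δ =>
            (δ.1, Atom.const (itemsProd (fun _ => 0) (its.take j)) :: (Wj ++ δ.2)), ?_, ?_⟩
          · rintro b hb
            rw [List.mem_map] at hb
            obtain ⟨δ, hδ, rfl⟩ := hb
            obtain ⟨pwδ, ovδ, carδ, disjδ, esubδ, ssubδ, valδ⟩ := hD1 δ hδ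
            have hvars_e : varsL (Atom.const (itemsProd (fun _ => 0) (its.take j))
                :: (Wj ++ δ.2)) = varsL Wj ∪ varsL δ.2 := by
              rw [varsL_cons_const, varsL_append]
            refine ⟨pwδ, ovδ, ?_, ?_, ?_, ssubδ.trans hTsubIts, ?_⟩
            · intro t ht
              rcases List.mem_cons.mp ht with rfl | ht
              · exact hcH
              · rcases List.mem_append.mp ht with ht | ht
                · exact hJgood t ht
                · exact carδ t ht
            · rw [hvars_e, Set.disjoint_union_left]
              refine ⟨?_, disjδ⟩
              rw [hWjv]
              exact Disjoint.mono_right ssubδ dJTv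
            · rw [hvars_e]
              apply Set.union_subset
              · rw [hWjv, varsItems_decomp hj]
                intro i hi
                exact Or.inr (Or.inl hi)
              · exact esubδ.trans hTsubIts
            · intro k hold
              rw [hprodd k, valδ k hold]
              simp
          · intro k
            constructor
            · rintro ⟨⟨-, hC⟩, hP⟩
              have hT : itemsProd k (its.drop (j + 1)) ∈ H ν := by
                have h2 : itemsProd k (its.drop (j + 1))
                    = (evalL k Wj)⁻¹ * ((itemsProd (fun _ => 0) (its.take j))⁻¹
                        * itemsProd k its) := by
                  rw [hprodd k]
                  group
                rw [h2]
                exact mul_mem (inv_mem (hWjmem k)) (mul_mem (inv_mem hcH) hP)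
              obtain ⟨δ, hδ, hsys⟩ := (hD2 k).mp hT
              exact ⟨_, List.mem_map.mpr ⟨δ, hδ, rfl⟩, hsys⟩
            · rintro ⟨b, hb, hold⟩
              rw [List.mem_map] at hb
              obtain ⟨δ, hδ, rfl⟩ := hb
              have hT := (hD2 k).mpr ⟨δ, hδ, hold⟩
              refine ⟨⟨by rw [hit]; rfl, by rw [hconstA k]; exact hcH⟩, ?_⟩
              rw [hprodd k]
              exact mul_mem hcH (mul_mem (hWjmem k) hT)
      · -- S3: at least one block before j
        apply hCommon Wj
        · exact hJgood
        · intro k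
          rw [hit]
          simp
        · rw [hit, itemVars_block]
        · apply rel3_of
          right; right
          rw [hit] at hcV hcC hcB
          simp only [isVarB_block, isCoefB_block, isBlockB_block, Bool.false_eq_true,
            if_false, if_true] at hcV hcC hcB
          unfold Vn Cn Bn at *
          refine ⟨by rcases Bool.eq_false_or_eq_true (hasPowB Wj) with hw | hw <;> simp [hw] at hcV <;> omega, by omega, by omega⟩
        · intro e he
          apply rel3_of
          right; right
          rw [hit] at hcV hcC hcB
          simp only [isVarB_block, isCoefB_block, isBlockB_block, Bool.false_eq_true,
            if_false, if_true] at hcV hcC hcB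
          rw [Vn_cons, Cn_cons, Bn_cons]
          simp only [isVarB_block, isCoefB_block, isBlockB_block, Bool.false_eq_true,
            if_false, if_true]
          refine ⟨?_, by unfold Cn at *; omega, by unfold Bn at *; omega⟩
          simp only [hasPowB_append]
          have hposA : hasPowB e = true → 0 < Vn (its.take j) :=
            fun hpe => Vn_pos_of_hasPow hpe he
          rcases Bool.eq_false_or_eq_true (hasPowB e) with hpe | hpe <;>
            rcases Bool.eq_false_or_eq_true (hasPowB Wj) with hpw | hpw <;>
            simp only [hpe, hpw, Bool.false_or, Bool.true_or, Bool.or_self, Bool.false_eq_true,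
              if_false, if_true] at hcV ⊢
          · have h0 := hposA hpe
            unfold Vn at *
            omega
          · have h0 := hposA hpe
            unfold Vn at *
            omega
          · unfold Vn at *
            omega
          · unfold Vn at *
            omega

  -- assembly
  choose fS hS1 hS2 using hSlot
  have hfin := hemb.2.2 ν its.length
  have hmemball : ∀ c, c ∈ hfin.toFinset.toList →
      c ∈ H ν ∧ relMetric X H ν 1 c ≤ (its.length : ℕ∞) := by
    intro c hc
    rwa [Finset.mem_toList, Set.Finite.mem_toFinset] at hc
  choose fB hB1 hB2 using fun c hc => hBall c (hmemball c hc).1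
  refine ⟨((List.finRange its.length).flatMap fun j => fS j.1 j.isLt)
      ++ hfin.toFinset.toList.attach.flatMap (fun c => fB c.1 c.2), ?_, ?_⟩
  · intro b hb
    rcases List.mem_append.mp hb with hb | hb
    · rw [List.mem_flatMap] at hb
      obtain ⟨j, -, hb⟩ := hb
      exact hS1 j.1 j.isLt b hb
    · rw [List.mem_flatMap] at hb
      obtain ⟨⟨c, hc⟩, -, hb⟩ := hb
      exact hB1 c hc b hb
  · intro k
    constructor
    · intro hmem
      by_cases hslot : ∃ j : Fin its.length,
          itemLam (its[j.1]'j.isLt) = some ν ∧ itemsProd k (its.take j.1) ∈ H ν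
      · obtain ⟨j, hsl⟩ := hslot
        obtain ⟨b, hb, hold⟩ := (hS2 j.1 j.isLt k).mp ⟨hsl, hmem⟩
        exact ⟨b, List.mem_append_left _
          (List.mem_flatMap.mpr ⟨j, List.mem_finRange j, hb⟩), hold⟩
      · have hns : ∀ j, (hj : j < its.length) →
            ¬(itemLam (its[j]'hj) = some ν ∧ itemsProd k (its.take j) ∈ H ν) := by
          intro j hj hcon
          exact hslot ⟨⟨j, hj⟩, hcon⟩
        have hrm := skel hX1 hGood.1 ν k hns
        have hmem2 : itemsProd k its ∈ hfin.toFinset.toList := by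
          rw [Finset.mem_toList, Set.Finite.mem_toFinset]
          exact ⟨hmem, hrm⟩
        obtain ⟨b, hb, hold⟩ := (hB2 _ hmem2 k).mp rfl
        exact ⟨b, List.mem_append_right _
          (List.mem_flatMap.mpr ⟨⟨_, hmem2⟩, List.mem_attach _ _, hb⟩), hold⟩
    · rintro ⟨b, hb, hold⟩
      rcases List.mem_append.mp hb with hb | hb
      · rw [List.mem_flatMap] at hb
        obtain ⟨j, -, hb⟩ := hb
        exact ((hS2 j.1 j.isLt k).mpr ⟨b, hb, hold⟩).2
      · rw [List.mem_flatMap] at hb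
        obtain ⟨⟨c, hc⟩, -, hb⟩ := hb
        have hc2 := (hB2 c hc k).mpr ⟨b, hb, hold⟩
        rw [hc2]
        exact (hmemball c hc).1

end PfAux

namespace PfAux

open Item

variable {G Λ ι : Type*} [Group G] {X : Set G} {H : Λ → Subgroup G}

lemma itemsProd_map_coef (k : ι → ℤ) (w : List (RelLetter G X H)) :
    itemsProd k (w.map Item.coef) = (w.map RelLetter.val).prod := by
  rw [itemsProd, List.map_map]
  rfl

lemma good_map_coef (w : List (RelLetter G X H)) : Good (ι := ι) (w.map Item.coef) := by
  constructor
  · intro it hit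
    rw [List.mem_map] at hit
    obtain ⟨l, -, rfl⟩ := hit
    trivial
  · induction w with
    | nil => simp
    | cons x w ih =>
      rw [List.map_cons, List.pairwise_cons]
      refine ⟨?_, ih⟩
      intro b hb
      simp

def buildItems {α : Type*} (f : α → List (Item G X H ι)) : List α → List (Item G X H ι)
  | [] => []
  | i :: is => f i ++ buildItems f is

lemma itemsProd_buildItems {α : Type*} (k : ι → ℤ) (f : α → List (Item G X H ι)) :
    ∀ is : List α, itemsProd k (buildItems f is) = (is.map fun i => itemsProd k (f i)).prod := by
  intro is
  induction is with
  | nil => simp [buildItems]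
  | cons i is ih => simp [buildItems, ih]

lemma mem_buildItems {α : Type*} {f : α → List (Item G X H ι)} {it : Item G X H ι} :
    ∀ {is : List α}, it ∈ buildItems f is → ∃ i ∈ is, it ∈ f i := by
  intro is
  induction is with
  | nil => intro h; simp [buildItems] at h
  | cons i is ih =>
    intro h
    rcases List.mem_append.mp h with h | h
    · exact ⟨i, List.mem_cons_self, h⟩
    · obtain ⟨i', hi', h'⟩ := ih h
      exact ⟨i', List.mem_cons_of_mem _ hi', h'⟩

lemma good_buildItems {α : Type*} {f : α → List (Item G X H ι)} {vs : α → Set ι}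
    (hg : ∀ i : α, Good (f i)) (hv : ∀ i : α, ∀ it ∈ f i, itemVars it ⊆ vs i) :
    ∀ is : List α, is.Pairwise (fun i j => Disjoint (vs i) (vs j)) →
      Good (buildItems f is) := by
  intro is
  induction is with
  | nil => intro _; exact ⟨by simp [buildItems], by simp [buildItems]⟩
  | cons i is ih =>
    intro hpw
    rw [List.pairwise_cons] at hpw
    have hrest := ih hpw.2
    show Good (f i ++ buildItems f is)
    constructor
    · intro it hit
      rcases List.mem_append.mp hit with hit | hit
      · exact (hg i).1 it hit
      · exact hrest.1 it hit
    · rw [List.pairwise_append]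
      refine ⟨(hg i).2, hrest.2, ?_⟩
      intro x hx y hy
      obtain ⟨j, hj, hyj⟩ := mem_buildItems hy
      exact Disjoint.mono (hv i x hx) (hv j y hyj) (hpw.1 j hj)

end PfAux


open ExpPaper

set_option linter.unusedSectionVars false in
set_option maxHeartbeats 1000000 in
/-- **Proposition (peripheral equations).** Suppose `{H_λ}` is hyperbolically
embedded in `G` with respect to a symmetric relative generating set `X ∋ 1`. Any
exponential equation with arbitrary coefficients `a i ∈ G` and `g i ∈ H (lam i)` is
equivalent to a finite disjunction of finite systems of pairwise independent
exponential equations, each of which is over `H_λ` for some `λ ∈ Λ`. -/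
theorem proposition_peripheral_equation
    {G Λ : Type*} [Group G] (X : Set G) (H : Λ → Subgroup G)
    (hXsym : X = X⁻¹) (hX1 : (1 : G) ∈ X) (hemb : IsHypEmbedded X H)
    (n : ℕ) (a g : Fin n → G) (lam : Fin n → Λ)
    (hg : ∀ i, g i ∈ H (lam i)) :
    ∃ Φ : List (List (ExpEq G (Fin n))),
      (∀ sys ∈ Φ, sys.Pairwise ExpEq.Indep) ∧
      (∀ sys ∈ Φ, ∀ E ∈ sys, ∃ mu : Λ, E.isOver (H mu : Set G)) ∧
      ∀ k : Fin n → ℤ, k ∈ stdSolZ a g ↔ SatDisj Φ k := by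
  classical
  rcases Nat.eq_zero_or_pos n with hn | hn
  · subst hn
    refine ⟨[[]], ?_, ?_, ?_⟩
    · intro sys hsys
      rw [List.mem_singleton] at hsys
      subst hsys
      exact List.Pairwise.nil
    · intro sys hsys E hE
      rw [List.mem_singleton] at hsys
      subst hsys
      simp at hE
    · intro k
      simp only [stdSolZ, Set.mem_setOf_eq, SatDisj]
      constructor
      · intro _
        exact ⟨[], List.mem_singleton_self _, fun E hE => by simp at hE⟩
      · intro _
        simp
  · have hν0 : (0 : ℕ) < n := hn
    set ν0 : Λ := lam ⟨0, hν0⟩ with hν0def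
    choose wa hwa using fun i => PfAux.exists_word (H := H) hXsym hemb.1 (a i)
    set f : Fin n → List (PfAux.Item G X H (Fin n)) := fun i =>
      (wa i).map PfAux.Item.coef
        ++ [PfAux.Item.block [Atom.pow (g i) i] (lam i)] with hf
    set its0 := PfAux.buildItems f (List.finRange n) with hits0
    have hprodf : ∀ (k : Fin n → ℤ) (i : Fin n),
        PfAux.itemsProd k (f i) = a i * g i ^ k i := by
      intro k i
      rw [hf]
      rw [PfAux.itemsProd_append, PfAux.itemsProd_map_coef, hwa i]
      simp
    have hprod0 : ∀ k : Fin n → ℤ,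
        PfAux.itemsProd k its0 = (List.ofFn fun i => a i * g i ^ k i).prod := by
      intro k
      rw [hits0, PfAux.itemsProd_buildItems, List.ofFn_eq_map]
      congr 1
      exact List.map_congr_left fun i _ => hprodf k i
    have hGood0 : PfAux.Good its0 := by
      rw [hits0]
      apply PfAux.good_buildItems (vs := fun i => ({i} : Set (Fin n)))
      · intro i
        rw [hf]
        constructor
        · intro it hit
          rcases List.mem_append.mp hit with hit | hit
          · exact (PfAux.good_map_coef (wa i)).1 it hit
          · rw [List.mem_singleton] at hit
            subst hit
            intro t ht
            rw [List.mem_singleton] at ht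
            subst ht
            exact hg i
        · rw [List.pairwise_append]
          refine ⟨(PfAux.good_map_coef (wa i)).2, List.pairwise_singleton _ _, ?_⟩
          intro x hx y hy
          rw [List.mem_map] at hx
          obtain ⟨l, -, rfl⟩ := hx
          simp
      · intro i it hit
        rw [hf] at hit
        rcases List.mem_append.mp hit with hit | hit
        · rw [List.mem_map] at hit
          obtain ⟨l, -, rfl⟩ := hit
          simp
        · rw [List.mem_singleton] at hit
          subst hit
          simp
      · have hnd := List.nodup_finRange n
        exact hnd.imp (fun hne => by simpa [Set.disjoint_singleton] using hne)
    obtain ⟨brs, hbrs1, hbrs2⟩ := PfAux.main hXsym hX1 hemb its0 hGood0 ν0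
    refine ⟨brs.map fun b => b.1 ++ [ExpEq.mk b.2], ?_, ?_, ?_⟩
    · intro sys hsys
      rw [List.mem_map] at hsys
      obtain ⟨b, hb, rfl⟩ := hsys
      rw [List.pairwise_append]
      refine ⟨(hbrs1 b hb).pw, List.pairwise_singleton _ _, ?_⟩
      intro E hE F hF
      rw [List.mem_singleton] at hF
      subst hF
      exact Disjoint.mono_left (PfAux.vars_sub_sysVars hE) (hbrs1 b hb).disj.symm
    · intro sys hsys E hE
      rw [List.mem_map] at hsys
      obtain ⟨b, hb, rfl⟩ := hsys
      rcases List.mem_append.mp hE with hE | hE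
      · exact (hbrs1 b hb).isOver E hE
      · rw [List.mem_singleton] at hE
        subst hE
        exact ⟨ν0, (hbrs1 b hb).car⟩
    · intro k
      simp only [stdSolZ, Set.mem_setOf_eq, SatDisj]
      constructor
      · intro hsol
        have h1 : PfAux.itemsProd k its0 = 1 := by rw [hprod0 k]; exact hsol
        have hmem : PfAux.itemsProd k its0 ∈ H ν0 := by rw [h1]; exact one_mem _
        obtain ⟨b, hb, hold⟩ := (hbrs2 k).mp hmem
        have hval := (hbrs1 b hb).val k hold
        refine ⟨b.1 ++ [ExpEq.mk b.2], List.mem_map.mpr ⟨b, hb, rfl⟩, ?_⟩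
        intro E hE
        rcases List.mem_append.mp hE with hE | hE
        · exact hold E hE
        · rw [List.mem_singleton] at hE
          subst hE
          rw [PfAux.holds_mk, ← hval, ← h1]
      · rintro ⟨sys, hsys, hall⟩
        rw [List.mem_map] at hsys
        obtain ⟨b, hb, rfl⟩ := hsys
        have hold : ∀ E ∈ b.1, E.holds k := fun E hE => hall E (List.mem_append_left _ hE)
        have hmk := hall _ (List.mem_append_right _ (List.mem_singleton_self _))
        rw [PfAux.holds_mk] at hmk
        rw [← hprod0 k, (hbrs1 b hb).val k hold]
        exact hmk
end

section
/- Let G be a virtually cyclic group. Then the solution set of any exponential equation a_1 g_1^{x_1} a_2 g_2^{x_2} ... a_n g_n^{x_n} = 1 with coefficients a_1, ..., a_n, g_1, ..., g_n ∈ G is a ℤ-semilinear subset of ℤ^n. -/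
open ExpPaper


section AuxSemilinear

open Set

lemma aux_zsemilinear_empty {ι : Type*} : IsZSemilinear (∅ : Set (ι → ℤ)) :=
  ⟨0, Fin.elim0, fun i => i.elim0, by simp⟩

lemma aux_zlinear_zsemilinear {ι : Type*} {S : Set (ι → ℤ)} (h : IsZLinear S) :
    IsZSemilinear S := ⟨1, fun _ => S, fun _ => h, (Set.iUnion_const S).symm⟩

lemma aux_zsemilinear_iUnion {ι κ : Type*} [Fintype κ] (f : κ → Set (ι → ℤ))
    (h : ∀ i, IsZSemilinear (f i)) : IsZSemilinear (⋃ i, f i) := by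
  choose m F hF hfF using h
  let σ := (i : κ) × Fin (m i)
  refine ⟨Fintype.card σ,
    fun j => F ((Fintype.equivFin σ).symm j).1 ((Fintype.equivFin σ).symm j).2,
    fun j => hF _ _, ?_⟩
  ext x
  simp only [mem_iUnion]
  constructor
  · rintro ⟨i, hx⟩
    rw [hfF i] at hx
    obtain ⟨l, hx⟩ := mem_iUnion.mp hx
    refine ⟨Fintype.equivFin σ ⟨i, l⟩, ?_⟩
    rw [Equiv.symm_apply_apply]
    exact hx
  · rintro ⟨j, hx⟩
    exact ⟨((Fintype.equivFin σ).symm j).1, by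
      rw [hfF]; exact mem_iUnion.mpr ⟨_, hx⟩⟩

open Matrix in
lemma aux_zlinear_coset {n : ℕ} (H : Submodule ℤ (Fin n → ℤ)) (b : Fin n → ℤ) :
    IsZLinear ((fun x => x + b) '' (H : Set (Fin n → ℤ))) := by
  obtain ⟨t, ht⟩ := IsNoetherian.noetherian H
  let v : Fin t.card → (Fin n → ℤ) := fun j => (t.equivFin.symm j : Fin n → ℤ)
  have hv : Set.range v = (t : Set (Fin n → ℤ)) := by
    ext x
    constructor
    · rintro ⟨j, rfl⟩; exact (t.equivFin.symm j).2
    · intro hx; exact ⟨t.equivFin ⟨x, hx⟩, by simp [v]⟩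
  set A : Matrix (Fin n) (Fin t.card) ℤ := Matrix.of fun i j => v j i with hA
  have hAT : Aᵀ = v := by
    ext j i; rfl
  have hr : Set.range A.mulVec = (H : Set (Fin n → ℤ)) := by
    have h1 := Matrix.range_mulVecLin A
    rw [show A.col = v from funext fun j => funext fun i => rfl, hv, ht] at h1
    have h2 : Set.range A.mulVec = (LinearMap.range A.mulVecLin : Set (Fin n → ℤ)) := by
      ext x
      simp [LinearMap.mem_range, Matrix.mulVecLin_apply]
    rw [h2, h1]
  refine ⟨t.card, A, b, ?_⟩
  ext x
  constructor
  · rintro ⟨y, hy, rfl⟩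
    rw [← hr] at hy
    obtain ⟨z, rfl⟩ := hy
    exact ⟨z, rfl⟩
  · rintro ⟨z, rfl⟩
    exact ⟨A.mulVec z, by rw [← hr]; exact ⟨z, rfl⟩, rfl⟩

/-- The additive subgroup of exponents killing `c`. -/
def auxCKer {G : Type*} [Group G] (c : G) : Submodule ℤ ℤ where
  carrier := {t | c ^ t = 1}
  add_mem' := by
    intro s t hs ht
    simp only [Set.mem_setOf_eq] at *
    rw [zpow_add, hs, ht, one_mul]
  zero_mem' := by simp
  smul_mem' := by
    intro z t ht
    simp only [Set.mem_setOf_eq, smul_eq_mul] at *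
    rw [mul_comm, zpow_mul, ht, one_zpow]

/-- The linear form `z ↦ ∑ i, d i * z i`. -/
def auxDotL {n : ℕ} (d : Fin n → ℤ) : (Fin n → ℤ) →ₗ[ℤ] ℤ where
  toFun z := ∑ i, d i * z i
  map_add' := by
    intro x y
    simp [Pi.add_apply, mul_add, Finset.sum_add_distrib]
  map_smul' := by
    intro s x
    simp [Finset.mul_sum, smul_eq_mul, mul_left_comm]

lemma aux_push_prod {G : Type*} [Group G] (c : G)
    (hc : ∀ v : G, ∃ s : ℤ, v * c * v⁻¹ = c ^ s) :
    ∀ (n : ℕ) (h : Fin n → G) (e : Fin n → ℤ), ∃ (w : G) (d : Fin n → ℤ),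
      ∀ z : Fin n → ℤ, (List.ofFn fun i => h i * c ^ (e i * z i)).prod
        = w * c ^ (∑ i, d i * z i) := by
  intro n
  induction n with
  | zero => intro h e; exact ⟨1, 0, fun z => by simp⟩
  | succ n ih =>
    intro h e
    obtain ⟨w, d, hw⟩ := ih (fun i => h i.succ) (fun i => e i.succ)
    obtain ⟨s, hs⟩ := hc w⁻¹
    have hconj : ∀ t : ℤ, c ^ t * w = w * c ^ (s * t) := by
      intro t
      have h1 : w⁻¹ * c ^ t * w = c ^ (s * t) := by
        have h0 : (w⁻¹ * c * w⁻¹⁻¹) ^ t = w⁻¹ * c ^ t * w⁻¹⁻¹ := conj_zpow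
        rw [inv_inv] at h0 hs
        rw [← h0, hs, ← zpow_mul]
      calc c ^ t * w = w * (w⁻¹ * c ^ t * w) := by group
        _ = w * c ^ (s * t) := by rw [h1]
    refine ⟨h 0 * w, Fin.cons (s * e 0) d, fun z => ?_⟩
    rw [List.ofFn_succ, List.prod_cons]
    have htail : (List.ofFn fun i : Fin n =>
        h i.succ * c ^ (e i.succ * z i.succ)).prod
        = w * c ^ (∑ i : Fin n, d i * z i.succ) := hw (fun i => z i.succ)
    rw [htail]
    rw [Fin.sum_univ_succ]
    simp only [Fin.cons_zero, Fin.cons_succ]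
    calc h 0 * c ^ (e 0 * z 0) * (w * c ^ (∑ i : Fin n, d i * z i.succ))
        = h 0 * (c ^ (e 0 * z 0) * w) * c ^ (∑ i : Fin n, d i * z i.succ) := by
          group
      _ = h 0 * (w * c ^ (s * (e 0 * z 0))) * c ^ (∑ i : Fin n, d i * z i.succ) := by
          rw [hconj]
      _ = h 0 * w * c ^ (s * e 0 * z 0 + ∑ i : Fin n, d i * z i.succ) := by
          rw [zpow_add, mul_assoc s]
          group

end AuxSemilinear

/-- **Lemma.** The solution set of an exponential equation over a virtually cyclic
group is a `ℤ`-semilinear subset of `ℤ^n`. -/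
theorem virtually_cyclic_solution_set_zsemilinear
    {G : Type*} [Group G] (hvc : IsVirtuallyCyclic G)
    (n : ℕ) (a g : Fin n → G) :
    IsZSemilinear (stdSolZ a g) := by
  classical
  obtain ⟨C, hCcyc, hCindex⟩ := hvc
  haveI : C.FiniteIndex := ⟨hCindex⟩
  haveI : IsCyclic ↥C := hCcyc
  set N := C.normalCore with hNdef
  haveI hNnorm : N.Normal := Subgroup.normalCore_normal C
  haveI : N.FiniteIndex := Subgroup.finiteIndex_normalCore C
  haveI : IsCyclic ↥N :=
    isCyclic_of_surjective (Subgroup.subgroupOfEquivOfLe (Subgroup.normalCore_le C))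
      (Subgroup.subgroupOfEquivOfLe (Subgroup.normalCore_le C)).surjective
  obtain ⟨cN, hcN⟩ := IsCyclic.exists_generator (α := ↥N)
  set c : G := (cN : G) with hcdef
  have hc : ∀ v : G, ∃ s : ℤ, v * c * v⁻¹ = c ^ s := by
    intro v
    have hm : v * c * v⁻¹ ∈ N := hNnorm.conj_mem c cN.2 v
    obtain ⟨s, hs⟩ := Subgroup.mem_zpowers_iff.mp (hcN ⟨_, hm⟩)
    refine ⟨s, ?_⟩
    have := congrArg (Subtype.val) hs
    simpa using this.symm
  set m := N.index with hmdef
  have hm0 : 0 < m := Nat.pos_of_ne_zero Subgroup.FiniteIndex.index_ne_zero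
  have hgm : ∀ i, ∃ e : ℤ, c ^ e = g i ^ (m : ℤ) := by
    intro i
    have hmem : g i ^ m ∈ N := Subgroup.pow_index_mem N (g i)
    obtain ⟨e, he⟩ := Subgroup.mem_zpowers_iff.mp (hcN ⟨_, hmem⟩)
    refine ⟨e, ?_⟩
    have := congrArg (Subtype.val) he
    simpa [zpow_natCast] using this
  choose e he using hgm
  have hpush := fun r : Fin n → Fin m =>
    aux_push_prod c hc n (fun i => a i * g i ^ ((r i : ℤ))) e
  choose w d hw using hpush
  -- key pointwise identity
  have hkey : ∀ (r : Fin n → Fin m) (z : Fin n → ℤ),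
      (List.ofFn fun i => a i * g i ^ ((m : ℤ) * z i + (r i : ℤ))).prod
        = w r * c ^ (∑ i, d r i * z i) := by
    intro r z
    rw [← hw r z]
    congr 1
    apply congrArg
    funext i
    have h1 : g i ^ ((m : ℤ) * z i + (r i : ℤ))
        = g i ^ ((r i : ℤ)) * c ^ (e i * z i) := by
      rw [add_comm ((m : ℤ) * z i) ((r i : ℤ)), zpow_add]
      congr 1
      rw [zpow_mul, ← he i, ← zpow_mul]
    rw [h1, mul_assoc]
  -- the pieces
  set F : (Fin n → Fin m) → (Fin n → ℤ) → (Fin n → ℤ) :=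
    fun r z => fun i => (m : ℤ) * z i + (r i : ℤ) with hFdef
  have hdecomp : stdSolZ a g
      = ⋃ r : Fin n → Fin m, (F r) '' {z | w r * c ^ (∑ i, d r i * z i) = 1} := by
    ext k
    constructor
    · intro hk
      have hr : ∀ i, 0 ≤ k i % (m : ℤ) ∧ k i % (m : ℤ) < (m : ℤ) := fun i =>
        ⟨Int.emod_nonneg _ (by exact_mod_cast hm0.ne'), Int.emod_lt_of_pos _ (by exact_mod_cast hm0)⟩
      set r : Fin n → Fin m := fun i => ⟨(k i % (m : ℤ)).toNat, by
        have := hr i; omega⟩ with hrdef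
      set z : Fin n → ℤ := fun i => k i / (m : ℤ) with hzdef
      have hkz : ∀ i, k i = (m : ℤ) * z i + (r i : ℤ) := by
        intro i
        have h1 : ((r i : ℕ) : ℤ) = k i % (m : ℤ) := by
          simp only [hrdef]
          have := hr i; omega
        rw [h1, hzdef]
        exact (Int.mul_ediv_add_emod (k i) (m : ℤ)).symm
      refine Set.mem_iUnion.mpr ⟨r, ⟨z, ?_, ?_⟩⟩
      · show w r * c ^ (∑ i, d r i * z i) = 1
        rw [← hkey r z]
        have : (fun i => a i * g i ^ ((m : ℤ) * z i + (r i : ℤ)))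
            = fun i => a i * g i ^ k i := by
          funext i; rw [← hkz i]
        rw [this]
        exact hk
      · funext i
        exact (hkz i).symm
    · intro hk
      obtain ⟨r, z, hz, rfl⟩ := Set.mem_iUnion.mp hk
      show (List.ofFn fun i => a i * g i ^ (F r z i)).prod = 1
      simp only [hFdef]
      rw [hkey r z]
      exact hz
  rw [hdecomp]
  apply aux_zsemilinear_iUnion
  intro r
  by_cases hne : ∃ z0 : Fin n → ℤ, w r * c ^ (∑ i, d r i * z0 i) = 1
  · obtain ⟨z0, hz0⟩ := hne
    set K : Submodule ℤ ℤ := auxCKer c with hK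
    set V : Submodule ℤ (Fin n → ℤ) := (Submodule.comap (auxDotL (d r)) K).map
      ((m : ℤ) • (LinearMap.id : (Fin n → ℤ) →ₗ[ℤ] (Fin n → ℤ))) with hV
    have heq : (F r) '' {z | w r * c ^ (∑ i, d r i * z i) = 1}
        = (fun x => x + F r z0) '' (V : Set (Fin n → ℤ)) := by
      ext x
      constructor
      · rintro ⟨z, hz, rfl⟩
        refine ⟨fun i => (m : ℤ) * (z i - z0 i), ?_, ?_⟩
        · refine Submodule.mem_map.mpr ⟨fun i => z i - z0 i, ?_, ?_⟩
          · show (auxDotL (d r)) (fun i => z i - z0 i) ∈ K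
            show c ^ (∑ i, d r i * (z i - z0 i)) = 1
            have hsub : (∑ i, d r i * (z i - z0 i))
                = (∑ i, d r i * z i) - (∑ i, d r i * z0 i) := by
              rw [← Finset.sum_sub_distrib]
              congr 1; funext i; ring
            rw [hsub, zpow_sub]
            have h1 : c ^ (∑ i, d r i * z i) = (w r)⁻¹ :=
              eq_inv_of_mul_eq_one_right hz
            have h2 : c ^ (∑ i, d r i * z0 i) = (w r)⁻¹ :=
              eq_inv_of_mul_eq_one_right hz0
            rw [h1, h2, mul_inv_cancel]
          · funext i
            simp [smul_eq_mul]
        · funext i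
          simp only [hFdef, Pi.add_apply]
          ring
      · rintro ⟨y, hy, rfl⟩
        obtain ⟨u, hu, rfl⟩ := Submodule.mem_map.mp hy
        have hu' : c ^ (∑ i, d r i * u i) = 1 := hu
        refine ⟨fun i => u i + z0 i, ?_, ?_⟩
        · show w r * c ^ (∑ i, d r i * (u i + z0 i)) = 1
          have hsum : (∑ i, d r i * (u i + z0 i))
              = (∑ i, d r i * u i) + (∑ i, d r i * z0 i) := by
            rw [← Finset.sum_add_distrib]
            congr 1; funext i; ring
          rw [hsum, zpow_add, hu', one_mul]
          exact hz0
        · funext i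
          simp only [hFdef, Pi.add_apply, LinearMap.smul_apply, LinearMap.id_apply,
            Pi.smul_apply, smul_eq_mul]
          ring
    rw [heq]
    exact aux_zlinear_zsemilinear (aux_zlinear_coset V (F r z0))
  · have : (F r) '' {z | w r * c ^ (∑ i, d r i * z i) = 1} = ∅ := by
      rw [Set.image_eq_empty]
      ext z
      simp only [Set.mem_setOf_eq, Set.mem_empty_iff_false, iff_false]
      exact fun hz => hne ⟨z, hz⟩
    rw [this]
    exact aux_zsemilinear_empty
end
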